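/- arXiv:1112.6014 — 2 statements merged into one kernel-verified Lean document; each statement's English description precedes it below -/
import Mathlib

section
/- For every integer n ≥ 1, I_n(q,t) = t·I_{n-1}(q,t) + Σ_{k=0}^{n-2} I_k(q,t)·I_{n-1-k}(q,qt), as an identity in ℤ[q,t], where I_m(q,qt) denotes the polynomial I_m(q,t) with t replaced by qt. -/
open Finset MvPolynomial

/-- `σ` avoids the pattern 321. -/
def Avoids321 {n : ℕ} (σ : Equiv.Perm (Fin n)) : Prop :=
  ¬ ∃ i j k : Fin n, i < j ∧ j < k ∧ σ k < σ j ∧ σ j < σ i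

instance {n : ℕ} : DecidablePred (Avoids321 (n := n)) := fun σ => by
  unfold Avoids321; infer_instance

/-- The set of 321-avoiding permutations of `{1,…,n}` (modelled on `Fin n`). -/
def Av (n : ℕ) : Finset (Equiv.Perm (Fin n)) := univ.filter Avoids321

/-- The number of inversions of a permutation. -/
def invPerm {n : ℕ} (σ : Equiv.Perm (Fin n)) : ℕ :=
  (univ.filter (fun p : Fin n × Fin n => p.1 < p.2 ∧ σ p.2 < σ p.1)).card

/-- Position `i` is a left-right maximum of `σ`. -/
def IsLRMax {n : ℕ} (σ : Equiv.Perm (Fin n)) (i : Fin n) : Prop :=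
  ∀ j, j ≤ i → σ j ≤ σ i

instance {n : ℕ} (σ : Equiv.Perm (Fin n)) : DecidablePred (IsLRMax σ) := fun i => by
  unfold IsLRMax; infer_instance

/-- The number of left-right maxima of `σ`. -/
def lrm {n : ℕ} (σ : Equiv.Perm (Fin n)) : ℕ := (univ.filter (IsLRMax σ)).card

/-- The number of fixed points of `σ`. -/
def fixPerm {n : ℕ} (σ : Equiv.Perm (Fin n)) : ℕ := (univ.filter (fun i => σ i = i)).card

/-- The number of excedances of `σ`. -/
def excPerm {n : ℕ} (σ : Equiv.Perm (Fin n)) : ℕ := (univ.filter (fun i => i < σ i)).card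

/-- The descent set of `σ`: `i` is in it iff `σ` descends from position `i+1` to `i+2`
(0-based index `i` corresponds to the 1-based descent position `i+1`). -/
def DesPerm {n : ℕ} (σ : Equiv.Perm (Fin n)) : Finset (Fin n) :=
  univ.filter (fun i => ∃ h : i.val + 1 < n, σ ⟨i.val + 1, h⟩ < σ i)

/-- The number of descents of `σ`. -/
def desPerm {n : ℕ} (σ : Equiv.Perm (Fin n)) : ℕ := (DesPerm σ).card

/-- The major index of `σ` (descents at 1-based positions). -/
def majPerm {n : ℕ} (σ : Equiv.Perm (Fin n)) : ℕ := ∑ i ∈ DesPerm σ, (i.val + 1)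

/-- Number of `true` letters among the first `i` letters of the word `P`. -/
def UpCt {m : ℕ} (P : Fin m → Bool) (i : ℕ) : ℕ :=
  (univ.filter (fun j : Fin m => j.val < i ∧ P j = true)).card

/-- Number of `false` letters among the first `i` letters of the word `P`. -/
def DownCt {m : ℕ} (P : Fin m → Bool) (i : ℕ) : ℕ :=
  (univ.filter (fun j : Fin m => j.val < i ∧ P j = false)).card

/-- A word (with `true` = U, `false` = D) is a Dyck word: every prefix has at least as
many U's as D's, and the total numbers of U's and D's agree. -/
def IsDyck {m : ℕ} (P : Fin m → Bool) : Prop :=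
  (∀ i, i ≤ m → DownCt P i ≤ UpCt P i) ∧ UpCt P m = DownCt P m

instance {m : ℕ} : DecidablePred (IsDyck (m := m)) := fun P => by
  unfold IsDyck; infer_instance

/-- The Dyck paths of semilength `n`, as words of length `2n`. -/
def DyckSet (n : ℕ) : Finset (Fin (2 * n) → Bool) := univ.filter IsDyck

/-- Valleys (descents of the word, i.e. factors `DU`), recorded by the 0-based
index of the `D` step. -/
def Valleys {m : ℕ} (P : Fin m → Bool) : Finset (Fin m) :=
  univ.filter (fun j => P j = false ∧ ∃ h : j.val + 1 < m, P ⟨j.val + 1, h⟩ = true)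

/-- `des` of a path: the number of valleys. -/
def desPath {m : ℕ} (P : Fin m → Bool) : ℕ := (Valleys P).card

/-- `maj` of a path: the sum of the (1-based) positions of the descents. -/
def majPath {m : ℕ} (P : Fin m → Bool) : ℕ := ∑ j ∈ Valleys P, (j.val + 1)

/-- `α(P) = Σ_{i ∈ Des P} |p_i(P)|_U`. -/
def alphaPath {m : ℕ} (P : Fin m → Bool) : ℕ := ∑ j ∈ Valleys P, UpCt P (j.val + 1)

/-- `β(P) = Σ_{i ∈ Des P} |p_i(P)|_D`. -/
def betaPath {m : ℕ} (P : Fin m → Bool) : ℕ := ∑ j ∈ Valleys P, DownCt P (j.val + 1)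

/-- Peaks (factors `UD`), recorded by the 0-based index of the `U` step. -/
def Peaks {m : ℕ} (P : Fin m → Bool) : Finset (Fin m) :=
  univ.filter (fun j => P j = true ∧ ∃ h : j.val + 1 < m, P ⟨j.val + 1, h⟩ = false)

/-- The number of peaks of `P`. -/
def npea {m : ℕ} (P : Fin m → Bool) : ℕ := (Peaks P).card

/-- `spea P = Σ_p (HT(p) - 1)` over peaks `p`, where `HT` is the height of a peak. -/
def spea {m : ℕ} (P : Fin m → Bool) : ℕ :=
  ∑ j ∈ Peaks P, (UpCt P (j.val + 1) - DownCt P (j.val + 1) - 1)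

/-- The height of the path after `i` steps. -/
def htAt {m : ℕ} (P : Fin m → Bool) (i : ℕ) : ℤ := (UpCt P i : ℤ) - (DownCt P i : ℤ)

/-- The start of the tunnel of the valley whose lowest lattice point comes after
`k` steps: the largest `m < k` at which the path has the same height. -/
def tunnelStart {m : ℕ} (P : Fin m → Bool) (k : ℕ) : ℕ :=
  ((Finset.range k).filter (fun j => htAt P j = htAt P k)).sup id

/-- `stun P`: the sum over all valleys of the semilengths of their tunnels. -/
def stun {m : ℕ} (P : Fin m → Bool) : ℕ :=
  ∑ j ∈ Valleys P, (j.val + 1 - tunnelStart P (j.val + 1)) / 2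

/-- A parallelogram polyomino: a pair `(U,V)` of `N/E`-paths (`true` = N, `false` = E)
of the same length, with the same endpoints, such that `U` stays strictly above `V`
except at the endpoints (i.e. every proper nonempty prefix of `U` contains strictly
more `N`-steps than the corresponding prefix of `V`).  As noted by Fürlinger and
Hofbauer, the lower path begins with an `E`-step and the upper path ends with an
`E`-step; this is automatic for `m ≥ 2` and fixes the convention in the degenerate
case `m = 1`. -/
def IsParaPoly {m : ℕ} (U V : Fin m → Bool) : Prop :=
  UpCt U m = UpCt V m ∧ (∀ i, i < m → 1 ≤ i → UpCt V i < UpCt U i) ∧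
    UpCt V 1 = 0 ∧ UpCt U m = UpCt U (m - 1)

instance {m : ℕ} (U V : Fin m → Bool) : Decidable (IsParaPoly U V) := by
  unfold IsParaPoly; infer_instance

/-- The parallelogram polyominoes of size `n`. -/
def ParaSet (n : ℕ) : Finset ((Fin n → Bool) × (Fin n → Bool)) :=
  univ.filter (fun UV => IsParaPoly UV.1 UV.2)

/-- A shortened polyomino: a pair `(P,Q)` of `N/E`-paths of the same length with the
same endpoints such that `P` stays weakly above `Q` and the two paths share no
`N`-steps (an `N`-step is shared exactly when it occurs at the same index with equal
prefix `N`-counts). -/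
def IsShortPoly {m : ℕ} (P Q : Fin m → Bool) : Prop :=
  UpCt P m = UpCt Q m ∧ (∀ i, i ≤ m → UpCt Q i ≤ UpCt P i) ∧
    ∀ j : Fin m, UpCt P j.val = UpCt Q j.val → ¬(P j = true ∧ Q j = true)

instance {m : ℕ} (P Q : Fin m → Bool) : Decidable (IsShortPoly P Q) := by
  unfold IsShortPoly; infer_instance

/-- The shortened polyominoes of size `n`. -/
def ShortSet (n : ℕ) : Finset ((Fin n → Bool) × (Fin n → Bool)) :=
  univ.filter (fun PQ => IsShortPoly PQ.1 PQ.2)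

/-- The sum, over the `E`-steps of a path, of their heights (`N`-count before the step). -/
def eSum {m : ℕ} (W : Fin m → Bool) : ℕ :=
  ∑ j ∈ univ.filter (fun j : Fin m => W j = false), UpCt W j.val

/-- The area between the upper path `U` and the lower path `V`. -/
def areaPoly {m : ℕ} (U V : Fin m → Bool) : ℕ := eSum U - eSum V

/-- The number of columns spanned: the number of `E`-steps of the path. -/
def colPoly {m : ℕ} (W : Fin m → Bool) : ℕ := (univ.filter (fun j : Fin m => W j = false)).card

/-- `I_n(q,t) = Σ_{σ ∈ Av_n(321)} q^{inv σ} t^{lrm σ}`, with `q = X 0`, `t = X 1`. -/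
noncomputable def IPoly (n : ℕ) : MvPolynomial (Fin 2) ℤ :=
  ∑ σ ∈ Av n, X 0 ^ invPerm σ * X 1 ^ lrm σ

/-- `M_n(q,t) = Σ_{σ ∈ Av_n(321)} q^{maj σ} t^{des σ}`, with `q = X 0`, `t = X 1`. -/
noncomputable def MPoly (n : ℕ) : MvPolynomial (Fin 2) ℤ :=
  ∑ σ ∈ Av n, X 0 ^ majPerm σ * X 1 ^ desPerm σ

/-- `I_n(q,t,x) = Σ_{σ ∈ Av_n(321)} q^{inv σ} t^{lrm σ} x^{fix σ}`,
with `q = X 0`, `t = X 1`, `x = X 2`. -/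
noncomputable def IPoly3 (n : ℕ) : MvPolynomial (Fin 3) ℤ :=
  ∑ σ ∈ Av n, X 0 ^ invPerm σ * X 1 ^ lrm σ * X 2 ^ fixPerm σ

/-- `C_n(a,b;t) = Σ_{P ∈ D_n} a^{α(P)} b^{β(P)} t^{des P}`,
with `a = X 0`, `b = X 1`, `t = X 2`. -/
noncomputable def CPoly (n : ℕ) : MvPolynomial (Fin 3) ℤ :=
  ∑ P ∈ DyckSet n, X 0 ^ alphaPath P * X 1 ^ betaPath P * X 2 ^ desPath P

/-- `P_n(q,t) = Σ_{(U,V) ∈ 𝒫_n} q^{area(U,V)} t^{col(U,V)}`, with `q = X 0`, `t = X 1`. -/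
noncomputable def PPoly (n : ℕ) : MvPolynomial (Fin 2) ℤ :=
  ∑ UV ∈ ParaSet n, X 0 ^ areaPoly UV.1 UV.2 * X 1 ^ colPoly UV.1

/-- `I_n(-1,t) = Σ_{σ ∈ Av_n(321)} (-1)^{inv σ} t^{lrm σ} ∈ ℤ[t]`. -/
noncomputable def ISign (n : ℕ) : Polynomial ℤ :=
  ∑ σ ∈ Av n, Polynomial.C ((-1 : ℤ) ^ invPerm σ) * Polynomial.X ^ lrm σ

/-- Substitution `t ↦ q^k t` for polynomials in `q = X 0`, `t = X 1`. -/
noncomputable def subT (k : ℕ) (f : MvPolynomial (Fin 2) ℤ) : MvPolynomial (Fin 2) ℤ :=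
  bind₁ (fun i : Fin 2 => if i = 0 then X 0 else X 0 ^ k * X 1) f

/-- Substitution `t ↦ u` (third variable) for polynomials in `a = X 0`, `b = X 1`, `t = X 2`. -/
noncomputable def subT3 (u : MvPolynomial (Fin 3) ℤ) (f : MvPolynomial (Fin 3) ℤ) :
    MvPolynomial (Fin 3) ℤ :=
  bind₁ (fun i : Fin 3 => if i = 2 then u else X i) f

/-- Substitution `x ↦ 1` (third variable) for polynomials in `q = X 0`, `t = X 1`, `x = X 2`. -/
noncomputable def subX1 (f : MvPolynomial (Fin 3) ℤ) : MvPolynomial (Fin 3) ℤ :=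
  bind₁ (fun i : Fin 3 => if i = 2 then 1 else X i) f

/-- `val σ`: indicator vector of left-right maximum values (`val σ i = 1` iff the value `i`
occurs at a left-right maximum position of `σ`). -/
def valVec {n : ℕ} (σ : Equiv.Perm (Fin n)) (i : Fin n) : ℕ :=
  if ∃ j, IsLRMax σ j ∧ σ j = i then 1 else 0

/-- `pos σ`: indicator vector of left-right maximum positions. -/
def posVec {n : ℕ} (σ : Equiv.Perm (Fin n)) (i : Fin n) : ℕ :=
  if IsLRMax σ i then 1 else 0

namespace Stmt16
open Equiv

variable {n m : ℕ}

/-- The weight of a permutation. -/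
noncomputable def wt {n : ℕ} (σ : Equiv.Perm (Fin n)) : MvPolynomial (Fin 2) ℤ :=
  X 0 ^ invPerm σ * X 1 ^ lrm σ

lemma IPoly_eq (n : ℕ) : IPoly n = ∑ σ ∈ Av n, wt σ := rfl

lemma filter_lt_eq (x : Fin n) : univ.filter (fun j : Fin n => j < x) = Finset.Iio x := by
  ext j; simp

lemma card_filter_lt (x : Fin n) : (univ.filter (fun j : Fin n => j < x)).card = x.val := by
  rw [filter_lt_eq, Fin.card_Iio]

lemma card_filter_apply_lt (σ : Equiv.Perm (Fin n)) (x : Fin n) :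
    (univ.filter (fun j : Fin n => σ j < x)).card = x.val := by
  rw [← card_filter_lt x]
  apply Finset.card_nbij (i := σ)
  · intro a ha; simpa using ha
  · intro a _ b _ hab; exact σ.injective hab
  · intro b hb
    simp only [coe_filter, mem_univ, true_and, Set.mem_setOf_eq] at hb ⊢
    exact ⟨σ.symm b, by simpa using hb, by simp⟩

lemma exists_argmax (σ : Equiv.Perm (Fin n)) (i : Fin n) :
    ∃ k, k ≤ i ∧ IsLRMax σ k ∧ ∀ y, y ≤ i → σ y ≤ σ k := by
  obtain ⟨k, hk, hmax⟩ := Finset.exists_max_image (univ.filter (· ≤ i)) σ ⟨i, by simp⟩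
  simp only [mem_filter, mem_univ, true_and] at hk
  refine ⟨k, hk, fun j hj => hmax j (by simp [le_trans hj hk]), fun y hy => hmax y (by simp [hy])⟩

lemma val_le_of_isLRMax {σ : Equiv.Perm (Fin n)} {i : Fin n} (h : IsLRMax σ i) :
    i.val ≤ (σ i).val := by
  have hcard := Finset.card_le_card_of_injOn σ
    (s := univ.filter (· ≤ i)) (t := univ.filter (· ≤ σ i))
    (fun a ha => by
      simp only [Finset.mem_coe, mem_filter, mem_univ, true_and] at ha ⊢; exact h a ha)
    (fun a _ b _ hab => σ.injective hab)
  have h1 : (univ.filter (· ≤ i)).card = i.val + 1 := by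
    rw [show univ.filter (· ≤ i) = Finset.Iic i by ext j; simp, Fin.card_Iic]
  have h2 : (univ.filter (· ≤ σ i)).card = (σ i).val + 1 := by
    rw [show univ.filter (· ≤ σ i) = Finset.Iic (σ i) by ext j; simp, Fin.card_Iic]
  omega

lemma avoids_nonmax_lt {σ : Equiv.Perm (Fin n)} (hA : Avoids321 σ) {i j : Fin n}
    (hij : i < j) (hi : ¬ IsLRMax σ i) : σ i < σ j := by
  by_contra hle
  push_neg at hle
  have hne : σ j ≠ σ i := fun h => absurd (σ.injective h) (ne_of_gt hij)
  obtain ⟨k, hk, hks⟩ : ∃ k, k ≤ i ∧ ¬ σ k ≤ σ i := by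
    by_contra hc; push_neg at hc; exact hi fun y hy => hc y hy
  have hki : k < i := lt_of_le_of_ne hk (fun h => hks (h ▸ le_refl _))
  exact hA ⟨k, i, j, hki, hij, lt_of_le_of_ne hle hne, not_le.1 hks⟩

lemma avoids_of_nonmax_mono {σ : Equiv.Perm (Fin n)}
    (H : ∀ i j, i < j → ¬ IsLRMax σ i → ¬ IsLRMax σ j → σ i < σ j) : Avoids321 σ := by
  rintro ⟨i, j, k, hij, hjk, h1, h2⟩
  have hj : ¬ IsLRMax σ j := fun h => absurd (h i hij.le) (not_le.2 h2)
  have hk : ¬ IsLRMax σ k := fun h => absurd (h j hjk.le) (not_le.2 h1)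
  exact absurd (H j k hjk hj hk) (not_lt.2 h1.le)

lemma inv_eq_sum {σ : Equiv.Perm (Fin n)} (hA : Avoids321 σ) :
    invPerm σ = ∑ i : Fin n, if IsLRMax σ i then (σ i).val - i.val else 0 := by
  have hstep : invPerm σ = ∑ i : Fin n,
      (univ.filter (fun j : Fin n => i < j ∧ σ j < σ i)).card := by
    unfold invPerm
    rw [Finset.card_eq_sum_card_fiberwise (f := Prod.fst) (t := univ) (fun x _ => mem_univ _)]
    refine Finset.sum_congr rfl fun i _ => ?_
    have himg : (univ.filter (fun p : Fin n × Fin n => p.1 < p.2 ∧ σ p.2 < σ p.1)).filter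
        (fun p => p.1 = i)
        = (univ.filter (fun j : Fin n => i < j ∧ σ j < σ i)).image (fun j => (i, j)) := by
      ext ⟨a, b⟩
      simp only [mem_filter, mem_univ, true_and, mem_image]
      constructor
      · rintro ⟨⟨h1, h2⟩, rfl⟩; exact ⟨b, ⟨h1, h2⟩, rfl⟩
      · rintro ⟨j, ⟨h1, h2⟩, hj⟩
        obtain ⟨rfl, rfl⟩ : i = a ∧ j = b := by
          constructor <;> [exact congrArg Prod.fst hj; exact congrArg Prod.snd hj]
        exact ⟨⟨h1, h2⟩, rfl⟩
    rw [himg, Finset.card_image_of_injective _ (fun a b hab => congrArg Prod.snd hab)]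
  rw [hstep]
  refine Finset.sum_congr rfl fun i _ => ?_
  by_cases hi : IsLRMax σ i
  · rw [if_pos hi]
    have hsub : univ.filter (fun j : Fin n => i < j ∧ σ j < σ i)
        = (univ.filter (fun j : Fin n => σ j < σ i)) \ (univ.filter (fun j : Fin n => j < i)) := by
      ext j
      simp only [mem_filter, mem_univ, true_and, mem_sdiff, not_lt]
      constructor
      · rintro ⟨h1, h2⟩; exact ⟨h2, h1.le⟩
      · rintro ⟨h1, h2⟩
        refine ⟨lt_of_le_of_ne h2 ?_, h1⟩
        rintro rfl; exact absurd h1 (lt_irrefl _)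
    have hBA : (univ.filter (fun j : Fin n => j < i)) ⊆ (univ.filter (fun j : Fin n => σ j < σ i)) := by
      intro j hj
      simp only [mem_filter, mem_univ, true_and] at hj ⊢
      exact lt_of_le_of_ne (hi j hj.le) (fun h => absurd (σ.injective h) (ne_of_lt hj))
    rw [hsub, Finset.card_sdiff_of_subset hBA, card_filter_apply_lt, card_filter_lt]
  · rw [if_neg hi]
    rw [Finset.card_eq_zero, Finset.filter_eq_empty_iff]
    rintro j - ⟨hij, hji⟩
    exact absurd (avoids_nonmax_lt hA hij hi) (not_lt.2 hji.le)

lemma lrm_eq_sum (σ : Equiv.Perm (Fin n)) :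
    lrm σ = ∑ i : Fin n, if IsLRMax σ i then 1 else 0 := by
  unfold lrm
  rw [Finset.card_filter]

end Stmt16
namespace Stmt16
open Equiv

variable {n a b : ℕ}

def SplitAt {n : ℕ} (σ : Equiv.Perm (Fin n)) (j : ℕ) : Prop :=
  ∀ i : Fin n, i.val < j → (σ i).val < j

instance {n : ℕ} (σ : Equiv.Perm (Fin n)) (j : ℕ) : Decidable (SplitAt σ j) := by
  unfold SplitAt; infer_instance

lemma splitAt_self (σ : Equiv.Perm (Fin n)) : SplitAt σ n := fun i _ => (σ i).isLt

lemma fsp_exists (σ : Equiv.Perm (Fin n)) : ∃ j, 0 < j ∧ SplitAt σ j :=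
  ⟨max n 1, by omega, fun i _ => lt_of_lt_of_le (σ i).isLt (le_max_left _ _)⟩

/-- the first positive split point. -/
def fsp {n : ℕ} (σ : Equiv.Perm (Fin n)) : ℕ := Nat.find (fsp_exists σ)

lemma fsp_pos (σ : Equiv.Perm (Fin n)) : 0 < fsp σ := (Nat.find_spec (fsp_exists σ)).1

lemma splitAt_fsp (σ : Equiv.Perm (Fin n)) : SplitAt σ (fsp σ) := (Nat.find_spec (fsp_exists σ)).2

lemma fsp_le {σ : Equiv.Perm (Fin n)} {j : ℕ} (hj : 0 < j) (h : SplitAt σ j) : fsp σ ≤ j :=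
  Nat.find_le ⟨hj, h⟩

lemma fsp_le_n {σ : Equiv.Perm (Fin n)} (hn : 0 < n) : fsp σ ≤ n := fsp_le hn (splitAt_self σ)

lemma fsp_eq_iff {σ : Equiv.Perm (Fin n)} {c : ℕ} (hc : 0 < c) :
    fsp σ = c ↔ SplitAt σ c ∧ ∀ j, 0 < j → j < c → ¬ SplitAt σ j := by
  rw [fsp, Nat.find_eq_iff]
  constructor
  · rintro ⟨⟨-, h1⟩, h2⟩
    exact ⟨h1, fun j hj hjc hs => h2 j hjc ⟨hj, hs⟩⟩
  · rintro ⟨h1, h2⟩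
    exact ⟨⟨hc, h1⟩, fun j hjc => by
      rintro ⟨hj, hs⟩; exact h2 j hj hjc hs⟩

/-- Block (direct) sum of permutations. -/
def dsum {a b : ℕ} (ρ : Equiv.Perm (Fin a)) (π : Equiv.Perm (Fin b)) : Equiv.Perm (Fin (a + b)) :=
  finSumFinEquiv.permCongr (Equiv.sumCongr ρ π)

lemma dsum_castAdd (ρ : Equiv.Perm (Fin a)) (π : Equiv.Perm (Fin b)) (i : Fin a) :
    dsum ρ π (Fin.castAdd b i) = Fin.castAdd b (ρ i) := by
  simp only [dsum, Equiv.permCongr_apply, ← finSumFinEquiv_apply_left, Equiv.symm_apply_apply,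
    Equiv.sumCongr_apply, Sum.map_inl]

lemma dsum_natAdd (ρ : Equiv.Perm (Fin a)) (π : Equiv.Perm (Fin b)) (i : Fin b) :
    dsum ρ π (Fin.natAdd a i) = Fin.natAdd a (π i) := by
  simp only [dsum, Equiv.permCongr_apply, ← finSumFinEquiv_apply_right, Equiv.symm_apply_apply,
    Equiv.sumCongr_apply, Sum.map_inr]

lemma dsum_val_lt (ρ : Equiv.Perm (Fin a)) (π : Equiv.Perm (Fin b)) {x : Fin (a + b)}
    (h : x.val < a) : (dsum ρ π x).val = (ρ ⟨x.val, h⟩).val := by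
  have hx : x = Fin.castAdd b ⟨x.val, h⟩ := Fin.ext rfl
  conv_lhs => rw [hx]
  rw [dsum_castAdd]
  rfl

lemma dsum_val_ge (ρ : Equiv.Perm (Fin a)) (π : Equiv.Perm (Fin b)) {x : Fin (a + b)}
    (h : a ≤ x.val) : (dsum ρ π x).val = a + (π ⟨x.val - a, by have := x.isLt; omega⟩).val := by
  have hx : x = Fin.natAdd a ⟨x.val - a, by have := x.isLt; omega⟩ := Fin.ext (by simp; omega)
  conv_lhs => rw [hx]
  rw [dsum_natAdd]
  rfl

lemma isLRMax_dsum_castAdd {ρ : Equiv.Perm (Fin a)} {π : Equiv.Perm (Fin b)} (i : Fin a) :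
    IsLRMax (dsum ρ π) (Fin.castAdd b i) ↔ IsLRMax ρ i := by
  constructor
  · intro h j hj
    have hle : Fin.castAdd b j ≤ Fin.castAdd b i := by
      rw [Fin.le_def] at hj ⊢; exact hj
    have := h (Fin.castAdd b j) hle
    rw [dsum_castAdd, dsum_castAdd, Fin.le_def] at this
    rw [Fin.le_def]
    exact this
  · intro h j hj
    rw [Fin.le_def] at hj
    have hjv : j.val < a := lt_of_le_of_lt hj i.isLt
    have hj' : j = Fin.castAdd b ⟨j.val, hjv⟩ := Fin.ext rfl
    have h2 : (⟨j.val, hjv⟩ : Fin a) ≤ i := hj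
    have h3 := h _ h2
    rw [Fin.le_def] at h3
    rw [Fin.le_def, hj', dsum_castAdd, dsum_castAdd]
    exact h3

lemma isLRMax_dsum_natAdd {ρ : Equiv.Perm (Fin a)} {π : Equiv.Perm (Fin b)} (i : Fin b) :
    IsLRMax (dsum ρ π) (Fin.natAdd a i) ↔ IsLRMax π i := by
  constructor
  · intro h j hj
    rw [Fin.le_def] at hj
    have hle : Fin.natAdd a j ≤ Fin.natAdd a i := by
      rw [Fin.le_def]; simp only [Fin.coe_natAdd]; omega
    have := h (Fin.natAdd a j) hle
    rw [dsum_natAdd, dsum_natAdd, Fin.le_def] at this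
    simp only [Fin.coe_natAdd] at this
    rw [Fin.le_def]
    omega
  · intro h j hj
    rw [Fin.le_def] at hj
    simp only [Fin.coe_natAdd] at hj
    rw [Fin.le_def, dsum_natAdd]
    simp only [Fin.coe_natAdd]
    rcases lt_or_ge j.val a with hja | hja
    · rw [dsum_val_lt ρ π hja]
      have := (ρ ⟨j.val, hja⟩).isLt
      omega
    · rw [dsum_val_ge ρ π hja]
      have h2 : (⟨j.val - a, by have := j.isLt; omega⟩ : Fin b) ≤ i := by
        rw [Fin.le_def]; simp; omega
      have h3 := h _ h2
      rw [Fin.le_def] at h3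
      omega

lemma sum_fin_add {M : Type*} [AddCommMonoid M] (F : Fin (a + b) → M) :
    ∑ x : Fin (a + b), F x
      = (∑ i : Fin a, F (Fin.castAdd b i)) + ∑ i : Fin b, F (Fin.natAdd a i) := by
  rw [← Fintype.sum_equiv finSumFinEquiv (fun y => F (finSumFinEquiv y)) F (fun _ => rfl),
    Fintype.sum_sum_type]
  simp [finSumFinEquiv_apply_left, finSumFinEquiv_apply_right]

lemma lrm_dsum (ρ : Equiv.Perm (Fin a)) (π : Equiv.Perm (Fin b)) :
    lrm (dsum ρ π) = lrm ρ + lrm π := by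
  rw [lrm_eq_sum, lrm_eq_sum, lrm_eq_sum, sum_fin_add]
  congr 1
  · exact Finset.sum_congr rfl fun i _ => by
      simp only [isLRMax_dsum_castAdd]
  · exact Finset.sum_congr rfl fun i _ => by
      simp only [isLRMax_dsum_natAdd]

lemma avoids_dsum_iff {ρ : Equiv.Perm (Fin a)} {π : Equiv.Perm (Fin b)} :
    Avoids321 (dsum ρ π) ↔ Avoids321 ρ ∧ Avoids321 π := by
  constructor
  · intro h
    constructor
    · rintro ⟨i, j, k, hij, hjk, h1, h2⟩
      refine h ⟨Fin.castAdd b i, Fin.castAdd b j, Fin.castAdd b k, ?_, ?_, ?_, ?_⟩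
      · rw [Fin.lt_def] at hij ⊢; exact hij
      · rw [Fin.lt_def] at hjk ⊢; exact hjk
      · rw [dsum_castAdd, dsum_castAdd, Fin.lt_def] at *; exact h1
      · rw [dsum_castAdd, dsum_castAdd, Fin.lt_def] at *; exact h2
    · rintro ⟨i, j, k, hij, hjk, h1, h2⟩
      refine h ⟨Fin.natAdd a i, Fin.natAdd a j, Fin.natAdd a k, ?_, ?_, ?_, ?_⟩
      · rw [Fin.lt_def] at hij ⊢; simp only [Fin.coe_natAdd]; omega
      · rw [Fin.lt_def] at hjk ⊢; simp only [Fin.coe_natAdd]; omega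
      · rw [dsum_natAdd, dsum_natAdd]
        rw [Fin.lt_def] at h1 ⊢; simp only [Fin.coe_natAdd]; omega
      · rw [dsum_natAdd, dsum_natAdd]
        rw [Fin.lt_def] at h2 ⊢; simp only [Fin.coe_natAdd]; omega
  · rintro ⟨hρ, hπ⟩
    apply avoids_of_nonmax_mono
    intro i j hij hi hj
    rw [Fin.lt_def] at hij
    rcases lt_or_ge i.val a with hia | hia
    · rcases lt_or_ge j.val a with hja | hja
      · have hi' : i = Fin.castAdd b ⟨i.val, hia⟩ := Fin.ext rfl
        have hj' : j = Fin.castAdd b ⟨j.val, hja⟩ := Fin.ext rfl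
        rw [hi'] at hi; rw [hj'] at hj
        rw [isLRMax_dsum_castAdd] at hi hj
        have := avoids_nonmax_lt hρ (i := ⟨i.val, hia⟩) (j := ⟨j.val, hja⟩)
          (by rw [Fin.lt_def]; exact hij) hi
        rw [Fin.lt_def] at this
        rw [Fin.lt_def, dsum_val_lt ρ π hia, dsum_val_lt ρ π hja]
        exact this
      · rw [Fin.lt_def, dsum_val_lt ρ π hia, dsum_val_ge ρ π hja]
        have := (ρ ⟨i.val, hia⟩).isLt
        omega
    · have hja : a ≤ j.val := le_trans hia (le_of_lt hij)
      have hi' : i = Fin.natAdd a ⟨i.val - a, by have := i.isLt; omega⟩ := Fin.ext (by simp; omega)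
      have hj' : j = Fin.natAdd a ⟨j.val - a, by have := j.isLt; omega⟩ := Fin.ext (by simp; omega)
      rw [hi'] at hi; rw [hj'] at hj
      rw [isLRMax_dsum_natAdd] at hi hj
      have := avoids_nonmax_lt hπ (i := ⟨i.val - a, by have := i.isLt; omega⟩)
        (j := ⟨j.val - a, by have := j.isLt; omega⟩)
        (by rw [Fin.lt_def]; show i.val - a < j.val - a; omega) hi
      rw [Fin.lt_def] at this
      rw [Fin.lt_def, dsum_val_ge ρ π hia, dsum_val_ge ρ π hja]
      omega

lemma inv_dsum {ρ : Equiv.Perm (Fin a)} {π : Equiv.Perm (Fin b)}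
    (hρ : Avoids321 ρ) (hπ : Avoids321 π) :
    invPerm (dsum ρ π) = invPerm ρ + invPerm π := by
  rw [inv_eq_sum (avoids_dsum_iff.2 ⟨hρ, hπ⟩), inv_eq_sum hρ, inv_eq_sum hπ, sum_fin_add]
  congr 1
  · refine Finset.sum_congr rfl fun i _ => ?_
    simp only [isLRMax_dsum_castAdd, dsum_castAdd]
    rfl
  · refine Finset.sum_congr rfl fun i _ => ?_
    simp only [isLRMax_dsum_natAdd, dsum_natAdd, Fin.coe_natAdd]
    by_cases h : IsLRMax π i
    · rw [if_pos h, if_pos h]; omega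
    · rw [if_neg h, if_neg h]

lemma splitAt_dsum_iff {ρ : Equiv.Perm (Fin a)} {π : Equiv.Perm (Fin b)} {j : ℕ} (hj : j ≤ a) :
    SplitAt (dsum ρ π) j ↔ SplitAt ρ j := by
  constructor
  · intro h i hi
    have := h (Fin.castAdd b i) (by simpa using hi)
    rw [dsum_castAdd] at this
    simpa using this
  · intro h x hx
    have hxa : x.val < a := lt_of_lt_of_le hx hj
    rw [dsum_val_lt ρ π hxa]
    exact h _ hx

lemma fsp_dsum (ρ : Equiv.Perm (Fin a)) (π : Equiv.Perm (Fin b)) (ha : 0 < a) :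
    fsp (dsum ρ π) = fsp ρ := by
  rw [fsp_eq_iff (fsp_pos ρ)]
  have hra : fsp ρ ≤ a := fsp_le_n ha
  constructor
  · exact (splitAt_dsum_iff hra).2 (splitAt_fsp ρ)
  · intro j hj hjf hs
    have : SplitAt ρ j := (splitAt_dsum_iff (le_trans (le_of_lt hjf) hra)).1 hs
    exact absurd (fsp_le hj this) (not_le.2 hjf)

lemma splitAt_ge {σ : Equiv.Perm (Fin (a + b))} (h : SplitAt σ a) {x : Fin (a + b)}
    (hx : a ≤ x.val) : a ≤ (σ x).val := by
  by_contra hc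
  push_neg at hc
  have hab : a < a + b := lt_of_le_of_lt hx x.isLt
  have hsub : ((univ : Finset (Fin a)).image (fun i => σ (Fin.castAdd b i)))
      ⊆ univ.filter (fun v : Fin (a + b) => v.val < a) := by
    intro v hv
    simp only [Finset.mem_image] at hv
    obtain ⟨i, -, rfl⟩ := hv
    simp only [Finset.mem_filter, Finset.mem_univ, true_and]
    exact h _ (by simpa using i.isLt)
  have hcard1 : ((univ : Finset (Fin a)).image (fun i => σ (Fin.castAdd b i))).card = a := by
    rw [Finset.card_image_of_injective _ (fun i j hij =>
      Fin.castAdd_injective a b (σ.injective hij)), Finset.card_univ, Fintype.card_fin]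
  have hcard2 : (univ.filter (fun v : Fin (a + b) => v.val < a)).card = a := by
    have he : (univ.filter (fun v : Fin (a + b) => v.val < a))
        = univ.filter (fun v : Fin (a + b) => v < (⟨a, hab⟩ : Fin (a + b))) := by
      ext v; simp [Fin.lt_def]
    rw [he, card_filter_lt]
  have heq := Finset.eq_of_subset_of_card_le hsub (by omega)
  have hmem : σ x ∈ (univ : Finset (Fin a)).image (fun i => σ (Fin.castAdd b i)) := by
    rw [heq]
    simp only [Finset.mem_filter, Finset.mem_univ, true_and]
    exact hc
  simp only [Finset.mem_image] at hmem
  obtain ⟨i, -, hi⟩ := hmem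
  have := σ.injective hi
  rw [← this] at hx
  simp only [Fin.coe_castAdd] at hx
  have := i.isLt
  omega

noncomputable def resL {a b : ℕ} (σ : Equiv.Perm (Fin (a + b))) (h : SplitAt σ a) :
    Equiv.Perm (Fin a) :=
  Equiv.ofBijective (fun i => ⟨(σ (Fin.castAdd b i)).val, h _ (by simpa using i.isLt)⟩)
    (Finite.injective_iff_bijective.1 (fun i j hij => by
      have hv := congrArg Fin.val hij
      exact Fin.castAdd_injective a b (σ.injective (Fin.ext hv))))

noncomputable def resR {a b : ℕ} (σ : Equiv.Perm (Fin (a + b))) (h : SplitAt σ a) :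
    Equiv.Perm (Fin b) :=
  Equiv.ofBijective (fun i => ⟨(σ (Fin.natAdd a i)).val - a, by
      have h1 := (σ (Fin.natAdd a i)).isLt
      have h2 := i.isLt
      omega⟩)
    (Finite.injective_iff_bijective.1 (fun i j hij => by
      have hi : a ≤ (σ (Fin.natAdd a i)).val := splitAt_ge h (by simp)
      have hj : a ≤ (σ (Fin.natAdd a j)).val := splitAt_ge h (by simp)
      have hv' := congrArg Fin.val hij
      have hv : (σ (Fin.natAdd a i)).val - a = (σ (Fin.natAdd a j)).val - a := hv'
      have heq : σ (Fin.natAdd a i) = σ (Fin.natAdd a j) := Fin.ext (by omega)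
      have := σ.injective heq
      have hval : a + i.val = a + j.val := by
        have := congrArg Fin.val this
        simpa using this
      exact Fin.ext (by omega)))

lemma resL_apply {σ : Equiv.Perm (Fin (a + b))} (h : SplitAt σ a) (i : Fin a) :
    (resL σ h i).val = (σ (Fin.castAdd b i)).val := rfl

lemma resR_apply {σ : Equiv.Perm (Fin (a + b))} (h : SplitAt σ a) (i : Fin b) :
    (resR σ h i).val = (σ (Fin.natAdd a i)).val - a := rfl

lemma dsum_res {σ : Equiv.Perm (Fin (a + b))} (h : SplitAt σ a) :
    dsum (resL σ h) (resR σ h) = σ := by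
  apply Equiv.ext
  intro x
  apply Fin.ext
  rcases lt_or_ge x.val a with hx | hx
  · rw [dsum_val_lt _ _ hx, resL_apply]
    have hxx : Fin.castAdd b ⟨x.val, hx⟩ = x := Fin.ext rfl
    rw [hxx]
  · rw [dsum_val_ge _ _ hx, resR_apply]
    have h1 : a ≤ (σ (Fin.natAdd a (⟨x.val - a, by have := x.isLt; omega⟩ : Fin b))).val :=
      splitAt_ge h (by simp)
    have h2 : Fin.natAdd a (⟨x.val - a, by have := x.isLt; omega⟩ : Fin b) = x :=
      Fin.ext (by simp only [Fin.coe_natAdd]; omega)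
    rw [h2] at h1 ⊢
    omega

lemma resL_dsum (ρ : Equiv.Perm (Fin a)) (π : Equiv.Perm (Fin b)) (h : SplitAt (dsum ρ π) a) :
    resL (dsum ρ π) h = ρ := by
  apply Equiv.ext; intro i; apply Fin.ext
  rw [resL_apply, dsum_castAdd]
  rfl

lemma resR_dsum (ρ : Equiv.Perm (Fin a)) (π : Equiv.Perm (Fin b)) (h : SplitAt (dsum ρ π) a) :
    resR (dsum ρ π) h = π := by
  apply Equiv.ext; intro i; apply Fin.ext
  rw [resR_apply, dsum_natAdd]
  simp

end Stmt16
namespace Stmt16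
open Equiv

variable {m : ℕ}

lemma max_prefix_ge {τ : Equiv.Perm (Fin m)} {i k : Fin m} (h : ∀ y, y ≤ i → τ y ≤ τ k) :
    i.val ≤ (τ k).val := by
  have hcard := Finset.card_le_card_of_injOn τ
    (s := univ.filter (· ≤ i)) (t := univ.filter (· ≤ τ k))
    (fun a ha => by
      simp only [Finset.mem_coe, Finset.mem_filter, Finset.mem_univ, true_and] at ha ⊢; exact h a ha)
    (fun a _ b _ hab => τ.injective hab)
  have h1 : (univ.filter (· ≤ i)).card = i.val + 1 := by
    rw [show univ.filter (· ≤ i) = Finset.Iic i by ext j; simp, Fin.card_Iic]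
  have h2 : (univ.filter (· ≤ τ k)).card = (τ k).val + 1 := by
    rw [show univ.filter (· ≤ τ k) = Finset.Iic (τ k) by ext j; simp, Fin.card_Iic]
  omega

/-- positions `< i` that are not left-right maxima. -/
def nmB (τ : Equiv.Perm (Fin m)) (i : ℕ) : Finset (Fin m) :=
  univ.filter (fun p => p.val < i ∧ ¬ IsLRMax τ p)

/-- `(τ p) + 1` where `p` is the last non-maximum position before `i`, or `0`. -/
def prevVal (τ : Equiv.Perm (Fin m)) (i : ℕ) : Fin (m + 1) :=
  match (nmB τ i).max with
  | ⊥ => 0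
  | some p => (τ p).succ

lemma prevVal_empty {τ : Equiv.Perm (Fin m)} {i : ℕ} (h : (nmB τ i).max = none) :
    prevVal τ i = 0 := by
  unfold prevVal; rw [h]

lemma prevVal_some {τ : Equiv.Perm (Fin m)} {i : ℕ} {p : Fin m} (h : (nmB τ i).max = some p) :
    prevVal τ i = (τ p).succ := by
  unfold prevVal; rw [h]

lemma mem_nmB {τ : Equiv.Perm (Fin m)} {i : ℕ} {p : Fin m} :
    p ∈ nmB τ i ↔ p.val < i ∧ ¬ IsLRMax τ p := by
  simp [nmB]

lemma nmB_max_spec {τ : Equiv.Perm (Fin m)} {i : ℕ} {p : Fin m} (h : (nmB τ i).max = some p) :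
    (p.val < i ∧ ¬ IsLRMax τ p) ∧ ∀ q : Fin m, q.val < i → ¬ IsLRMax τ q → q ≤ p := by
  refine ⟨mem_nmB.1 (Finset.mem_of_max h), fun q hq1 hq2 => ?_⟩
  have h2 := Finset.le_max (mem_nmB.2 ⟨hq1, hq2⟩)
  rw [h] at h2
  rwa [WithBot.some_eq_coe, WithBot.coe_le_coe] at h2

lemma nmB_max_eq {τ : Equiv.Perm (Fin m)} {i : ℕ} {p : Fin m}
    (hp : p ∈ nmB τ i) (hmax : ∀ q ∈ nmB τ i, q ≤ p) : (nmB τ i).max = some p := by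
  have h1 := Finset.le_max hp
  have h2 : (nmB τ i).max ≤ (p : WithBot (Fin m)) := Finset.max_le (fun q hq => by
    exact_mod_cast hmax q hq)
  exact le_antisymm h2 h1

/-- the function underlying `phi`. -/
def phiFun (τ : Equiv.Perm (Fin m)) : Fin (m + 1) → Fin (m + 1) :=
  Fin.lastCases (prevVal τ m)
    (fun j => if IsLRMax τ j then (τ j).succ else prevVal τ j.val)

lemma phiFun_castSucc (τ : Equiv.Perm (Fin m)) (j : Fin m) :
    phiFun τ j.castSucc = if IsLRMax τ j then (τ j).succ else prevVal τ j.val := by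
  unfold phiFun; rw [Fin.lastCases_castSucc]

lemma phiFun_last (τ : Equiv.Perm (Fin m)) :
    phiFun τ (Fin.last m) = prevVal τ m := by
  unfold phiFun; rw [Fin.lastCases_last]

lemma phiFun_lrm {τ : Equiv.Perm (Fin m)} {j : Fin m} (h : IsLRMax τ j) :
    phiFun τ j.castSucc = (τ j).succ := by rw [phiFun_castSucc, if_pos h]

lemma phiFun_nonlrm {τ : Equiv.Perm (Fin m)} {j : Fin m} (h : ¬ IsLRMax τ j) :
    phiFun τ j.castSucc = prevVal τ j.val := by rw [phiFun_castSucc, if_neg h]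

lemma phiFun_injective (τ : Equiv.Perm (Fin m)) : Function.Injective (phiFun τ) := by
  -- first: a helper describing values
  intro x y hxy
  by_contra hne
  -- wlog x.val < y.val
  have main : ∀ x y : Fin (m + 1), x.val < y.val → phiFun τ x ≠ phiFun τ y := by
    clear hxy hne x y
    intro x y hlt heq
    have hym : y.val ≤ m := Nat.lt_succ_iff.1 y.isLt
    have hxm : x.val < m := lt_of_lt_of_le hlt hym
    -- values of y
    have hx' : x = (⟨x.val, hxm⟩ : Fin m).castSucc := Fin.ext rfl
    by_cases hxL : IsLRMax τ ⟨x.val, hxm⟩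
    · -- x is an LRM position
      have hvx : phiFun τ x = (τ ⟨x.val, hxm⟩).succ := by
        conv_lhs => rw [hx']
        exact phiFun_lrm hxL
      -- y : either LRM (j < m) or prevVal
      rcases Fin.eq_castSucc_or_eq_last y with ⟨jy, rfl⟩ | rfl
      · by_cases hyL : IsLRMax τ jy
        · rw [hvx, phiFun_lrm hyL] at heq
          have := τ.injective (Fin.succ_injective m heq)
          rw [← this] at hlt
          simp at hlt
        · rw [hvx, phiFun_nonlrm hyL] at heq
          rcases hmax : (nmB τ jy.val).max with _ | p
          · rw [prevVal_empty hmax] at heq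
            exact absurd heq (Fin.succ_ne_zero _)
          · rw [prevVal_some hmax] at heq
            have hp := (nmB_max_spec hmax).1.2
            have := τ.injective (Fin.succ_injective m heq)
            rw [this] at hxL
            exact hp hxL
      · rw [hvx, phiFun_last] at heq
        rcases hmax : (nmB τ m).max with _ | p
        · rw [prevVal_empty hmax] at heq
          exact absurd heq (Fin.succ_ne_zero _)
        · rw [prevVal_some hmax] at heq
          have hp := (nmB_max_spec hmax).1.2
          have := τ.injective (Fin.succ_injective m heq)
          rw [this] at hxL
          exact hp hxL
    · -- x is a non-LRM position (class B): phiFun τ x = prevVal τ x.val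
      have hvx : phiFun τ x = prevVal τ x.val := by
        conv_lhs => rw [hx']
        exact phiFun_nonlrm hxL
      -- value of y is also prevVal or an LRM value
      have hyB : phiFun τ y = prevVal τ y.val ∨
          ∃ jy : Fin m, y = jy.castSucc ∧ IsLRMax τ jy ∧ phiFun τ y = (τ jy).succ := by
        rcases Fin.eq_castSucc_or_eq_last y with ⟨jy, rfl⟩ | rfl
        · by_cases hyL : IsLRMax τ jy
          · exact Or.inr ⟨jy, rfl, hyL, phiFun_lrm hyL⟩
          · exact Or.inl (phiFun_nonlrm hyL)
        · exact Or.inl (phiFun_last τ)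
      rcases hyB with hvy | ⟨jy, hy', hyL, hvy⟩
      · -- both prevVal.  x itself is in nmB τ y.val
        have hxin : (⟨x.val, hxm⟩ : Fin m) ∈ nmB τ y.val := mem_nmB.2 ⟨hlt, hxL⟩
        rcases hmaxy : (nmB τ y.val).max with _ | py
        · have hle := Finset.le_max hxin
          rw [hmaxy] at hle
          exact absurd hle (WithBot.not_coe_le_bot _)
        · have hspec := nmB_max_spec hmaxy
          have hxle : (⟨x.val, hxm⟩ : Fin m) ≤ py := hspec.2 _ hlt hxL
          rcases hmaxx : (nmB τ x.val).max with _ | px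
          · rw [hvx, hvy, prevVal_empty hmaxx, prevVal_some hmaxy] at heq
            exact absurd heq.symm (Fin.succ_ne_zero _)
          · rw [hvx, hvy, prevVal_some hmaxx, prevVal_some hmaxy] at heq
            have hpp := τ.injective (Fin.succ_injective m heq)
            have hpx := (nmB_max_spec hmaxx).1.1
            rw [hpp] at hpx
            have hxp : x.val ≤ py.val := hxle
            omega
      · -- y is an LRM value, x gives prevVal
        rw [hvx, hvy] at heq
        rcases hmaxx : (nmB τ x.val).max with _ | px
        · rw [prevVal_empty hmaxx] at heq
          exact absurd heq (Ne.symm (Fin.succ_ne_zero _))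
        · rw [prevVal_some hmaxx] at heq
          have := τ.injective (Fin.succ_injective m heq)
          have hpx := (nmB_max_spec hmaxx).1.2
          rw [this] at hpx
          exact hpx hyL
  rcases Nat.lt_trichotomy x.val y.val with h | h | h
  · exact main x y h hxy
  · exact hne (Fin.ext h)
  · exact main y x h hxy.symm

/-- The fundamental-bijection `phi : Av m → indecomposables of Av (m+1)`. -/
noncomputable def phi (τ : Equiv.Perm (Fin m)) : Equiv.Perm (Fin (m + 1)) :=
  Equiv.ofBijective (phiFun τ) (Finite.injective_iff_bijective.1 (phiFun_injective τ))

lemma phi_apply (τ : Equiv.Perm (Fin m)) (x : Fin (m + 1)) : phi τ x = phiFun τ x := rfl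

end Stmt16
namespace Stmt16
open Equiv

variable {m : ℕ}

lemma isLRMax_phi_of {τ : Equiv.Perm (Fin m)} {i : Fin m} (h : IsLRMax τ i) :
    IsLRMax (phi τ) i.castSucc := by
  intro j hj
  rw [phi_apply, phi_apply, phiFun_lrm h]
  have hjv : j.val < m := lt_of_le_of_lt (show j.val ≤ i.val from hj) i.isLt
  have hj' : j = (⟨j.val, hjv⟩ : Fin m).castSucc := Fin.ext rfl
  conv_lhs => rw [hj']
  rw [phiFun_castSucc]
  by_cases hL : IsLRMax τ ⟨j.val, hjv⟩
  · rw [if_pos hL, Fin.succ_le_succ_iff]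
    exact h _ (show (⟨j.val, hjv⟩ : Fin m) ≤ i from hj)
  · rw [if_neg hL]
    rcases hmax : (nmB τ j.val).max with _ | p
    · rw [prevVal_empty hmax]
      exact Fin.zero_le _
    · rw [prevVal_some hmax, Fin.succ_le_succ_iff]
      have hp := (nmB_max_spec hmax).1.1
      have hji : j.val ≤ i.val := hj
      exact h p (show p.val ≤ i.val by omega)

lemma not_isLRMax_phi_of {τ : Equiv.Perm (Fin m)} {i : Fin m} (h : ¬ IsLRMax τ i) :
    ¬ IsLRMax (phi τ) i.castSucc := by
  obtain ⟨ks, hki, hkL, hkmax⟩ := exists_argmax τ i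
  have hlt : τ i < τ ks := by
    obtain ⟨k, hk, hks⟩ : ∃ k, k ≤ i ∧ ¬ τ k ≤ τ i := by
      by_contra hc; push_neg at hc; exact h fun y hy => hc y hy
    exact lt_of_lt_of_le (not_le.1 hks) (hkmax k hk)
  intro hphi
  have hle := hphi ks.castSucc (show ks.val ≤ i.val from hki)
  rw [phi_apply, phi_apply, phiFun_lrm hkL, phiFun_nonlrm h] at hle
  rcases hmax : (nmB τ i.val).max with _ | p
  · rw [prevVal_empty hmax] at hle
    exact absurd (Fin.le_zero_iff.1 hle) (Fin.succ_ne_zero _)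
  · rw [prevVal_some hmax, Fin.succ_le_succ_iff] at hle
    have hspec := (nmB_max_spec hmax).1
    have hpi : p ≤ i := le_of_lt hspec.1
    have : τ p ≤ τ ks := hkmax p hpi
    have heq : τ p = τ ks := le_antisymm this hle
    have := τ.injective heq
    rw [this] at hspec
    exact hspec.2 hkL

lemma isLRMax_phi_iff {τ : Equiv.Perm (Fin m)} (i : Fin m) :
    IsLRMax (phi τ) i.castSucc ↔ IsLRMax τ i := by
  constructor
  · intro h; by_contra hc; exact not_isLRMax_phi_of hc h
  · exact isLRMax_phi_of

lemma not_isLRMax_phi_last {τ : Equiv.Perm (Fin m)} (hm : 0 < m) :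
    ¬ IsLRMax (phi τ) (Fin.last m) := by
  intro h
  rcases hmax : (nmB τ m).max with _ | p
  · set z : Fin m := ⟨0, hm⟩ with hz
    have hzL : IsLRMax τ z := by
      intro y hy
      have : y = z := Fin.ext (Nat.le_zero.1 hy)
      rw [this]
    have hle := h z.castSucc (Fin.le_last _)
    rw [phi_apply, phi_apply, phiFun_lrm hzL, phiFun_last, prevVal_empty hmax] at hle
    exact absurd (Fin.le_zero_iff.1 hle) (Fin.succ_ne_zero _)
  · have hspec := (nmB_max_spec hmax).1
    obtain ⟨ks, hki, hkL, hkmax⟩ := exists_argmax τ p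
    have hlt : τ p < τ ks := by
      obtain ⟨k, hk, hks⟩ : ∃ k, k ≤ p ∧ ¬ τ k ≤ τ p := by
        by_contra hc; push_neg at hc; exact hspec.2 fun y hy => hc y hy
      exact lt_of_lt_of_le (not_le.1 hks) (hkmax k hk)
    have hle := h ks.castSucc (Fin.le_last _)
    rw [phi_apply, phi_apply, phiFun_lrm hkL, phiFun_last, prevVal_some hmax,
      Fin.succ_le_succ_iff] at hle
    exact absurd hlt (not_lt.2 hle)

lemma phi_nonmax_eq {τ : Equiv.Perm (Fin m)} {x : Fin (m + 1)}
    (hx : ¬ IsLRMax (phi τ) x) : phi τ x = prevVal τ x.val := by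
  rcases Fin.eq_castSucc_or_eq_last x with ⟨j, rfl⟩ | rfl
  · by_cases hL : IsLRMax τ j
    · exact absurd (isLRMax_phi_of hL) hx
    · rw [phi_apply, phiFun_nonlrm hL]; rfl
  · rw [phi_apply, phiFun_last]; rfl

lemma lrm_phi (τ : Equiv.Perm (Fin m)) (hm : 0 < m) : lrm (phi τ) = lrm τ := by
  rw [lrm_eq_sum, lrm_eq_sum, Fin.sum_univ_castSucc]
  rw [if_neg (not_isLRMax_phi_last hm), add_zero]
  exact Finset.sum_congr rfl fun i _ => by
    by_cases h : IsLRMax τ i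
    · rw [if_pos h, if_pos (isLRMax_phi_of h)]
    · rw [if_neg h, if_neg (not_isLRMax_phi_of h)]

lemma avoids_phi {τ : Equiv.Perm (Fin m)} (hA : Avoids321 τ) : Avoids321 (phi τ) := by
  apply avoids_of_nonmax_mono
  intro x y hxy hx hy
  rw [Fin.lt_def] at hxy
  have hym : y.val ≤ m := Nat.lt_succ_iff.1 y.isLt
  have hxm : x.val < m := lt_of_lt_of_le hxy hym
  have hxnm : ¬ IsLRMax τ ⟨x.val, hxm⟩ := by
    intro hL
    have := isLRMax_phi_of hL
    rw [show (⟨x.val, hxm⟩ : Fin m).castSucc = x from Fin.ext rfl] at this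
    exact hx this
  rw [phi_nonmax_eq hx, phi_nonmax_eq hy]
  have hxin : (⟨x.val, hxm⟩ : Fin m) ∈ nmB τ y.val := mem_nmB.2 ⟨hxy, hxnm⟩
  rcases hmaxy : (nmB τ y.val).max with _ | py
  · have hle := Finset.le_max hxin
    rw [hmaxy] at hle
    exact absurd hle (WithBot.not_coe_le_bot _)
  · rw [prevVal_some hmaxy]
    have hspecy := nmB_max_spec hmaxy
    have hxpy : x.val ≤ py.val := hspecy.2 _ hxy hxnm
    rcases hmaxx : (nmB τ x.val).max with _ | px
    · rw [prevVal_empty hmaxx]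
      rw [Fin.lt_def, Fin.val_succ]
      simp
    · rw [prevVal_some hmaxx, Fin.succ_lt_succ_iff]
      have hspecx := (nmB_max_spec hmaxx).1
      exact avoids_nonmax_lt hA (show px < py by rw [Fin.lt_def]; omega) hspecx.2

lemma inv_phi {τ : Equiv.Perm (Fin m)} (hA : Avoids321 τ) (hm : 0 < m) :
    invPerm (phi τ) = invPerm τ + lrm τ := by
  rw [inv_eq_sum (avoids_phi hA), inv_eq_sum hA, lrm_eq_sum, Fin.sum_univ_castSucc]
  rw [if_neg (not_isLRMax_phi_last hm), add_zero]
  rw [show (∑ i : Fin m, if IsLRMax (phi τ) i.castSucc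
        then ((phi τ) i.castSucc).val - (i.castSucc).val else 0)
      = ∑ i : Fin m, ((if IsLRMax τ i then (τ i).val - i.val else 0)
        + (if IsLRMax τ i then 1 else 0)) from
    Finset.sum_congr rfl fun i _ => by
      by_cases h : IsLRMax τ i
      · rw [if_pos h, if_pos h, if_pos (isLRMax_phi_of h)]
        rw [phi_apply, phiFun_lrm h, Fin.val_succ, Fin.coe_castSucc]
        have := val_le_of_isLRMax h
        omega
      · rw [if_neg h, if_neg h, if_neg (not_isLRMax_phi_of h), add_zero]]
  rw [Finset.sum_add_distrib]

lemma fsp_phi (τ : Equiv.Perm (Fin m)) : fsp (phi τ) = m + 1 := by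
  rw [fsp_eq_iff (Nat.succ_pos m)]
  refine ⟨splitAt_self _, fun j hj0 hjm hs => ?_⟩
  have hjm' : j ≤ m := by omega
  have hj1 : j - 1 < m := by omega
  obtain ⟨k, hki, hkL, hkmax⟩ := exists_argmax τ ⟨j - 1, hj1⟩
  have hge : j - 1 ≤ (τ k).val := max_prefix_ge hkmax
  have hklt : (k.castSucc : Fin (m + 1)).val < j := by
    have : k.val ≤ j - 1 := hki
    rw [Fin.coe_castSucc]
    omega
  have := hs k.castSucc hklt
  rw [phi_apply, phiFun_lrm hkL, Fin.val_succ] at this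
  omega

end Stmt16
namespace Stmt16
open Equiv

variable {m : ℕ}

/-- non-LRM positions after `c`. -/
def nnS (ρ : Equiv.Perm (Fin (m + 1))) (c : ℕ) : Finset (Fin (m + 1)) :=
  univ.filter (fun p => c < p.val ∧ ¬ IsLRMax ρ p)

lemma mem_nnS {ρ : Equiv.Perm (Fin (m + 1))} {c : ℕ} {p : Fin (m + 1)} :
    p ∈ nnS ρ c ↔ c < p.val ∧ ¬ IsLRMax ρ p := by simp [nnS]

lemma nnS_nonempty {ρ : Equiv.Perm (Fin (m + 1))} (hlast : ¬ IsLRMax ρ (Fin.last m))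
    {c : ℕ} (hc : c < m) : (nnS ρ c).Nonempty :=
  ⟨Fin.last m, mem_nnS.2 ⟨by simpa using hc, hlast⟩⟩

/-- the first non-LRM position after `c` (needs one to exist). -/
def nextNM (ρ : Equiv.Perm (Fin (m + 1))) (c : ℕ) : Fin (m + 1) :=
  if h : (nnS ρ c).Nonempty then (nnS ρ c).min' h else 0

lemma nextNM_mem {ρ : Equiv.Perm (Fin (m + 1))} (hlast : ¬ IsLRMax ρ (Fin.last m))
    {c : ℕ} (hc : c < m) : nextNM ρ c ∈ nnS ρ c := by
  rw [nextNM, dif_pos (nnS_nonempty hlast hc)]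
  exact Finset.min'_mem _ _

lemma nextNM_min {ρ : Equiv.Perm (Fin (m + 1))} (hlast : ¬ IsLRMax ρ (Fin.last m))
    {c : ℕ} (hc : c < m) {q : Fin (m + 1)} (hq : q ∈ nnS ρ c) : nextNM ρ c ≤ q := by
  rw [nextNM, dif_pos (nnS_nonempty hlast hc)]
  exact Finset.min'_le _ _ hq

/-- the function underlying the inverse of `phi`. -/
def psiFun (ρ : Equiv.Perm (Fin (m + 1))) : Fin m → Fin m := fun i =>
  if IsLRMax ρ i.castSucc then
    ⟨(ρ i.castSucc).val - 1, by have h1 := (ρ i.castSucc).isLt; have h2 := i.isLt; omega⟩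
  else
    ⟨(ρ (nextNM ρ i.val)).val - 1, by
      have h1 := (ρ (nextNM ρ i.val)).isLt; have h2 := i.isLt; omega⟩

section psiContext

variable {ρ : Equiv.Perm (Fin (m + 1))} (hA : Avoids321 ρ)
  (hI : ∀ j, 0 < j → j ≤ m → ¬ SplitAt ρ j) (hm : 0 < m)

include hI hm in
lemma rho_lrm_pos {x : Fin (m + 1)} (h : IsLRMax ρ x) : 0 < (ρ x).val := by
  have h1 : ¬ SplitAt ρ 1 := hI 1 one_pos (by omega)
  rw [SplitAt] at h1
  push_neg at h1
  obtain ⟨i, hi, hge⟩ := h1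
  have hzero : (⟨0, Nat.succ_pos m⟩ : Fin (m + 1)) ≤ x := by
    rw [Fin.le_def]; exact Nat.zero_le _
  have hle : ρ ⟨0, Nat.succ_pos m⟩ ≤ ρ x := h _ hzero
  have h2 : (ρ ⟨0, Nat.succ_pos m⟩).val ≤ (ρ x).val := hle
  have h4 : i = ⟨0, Nat.succ_pos m⟩ := Fin.ext (show i.val = 0 by omega)
  rw [h4] at hge
  omega

include hI hm in
lemma not_lrm_last : ¬ IsLRMax ρ (Fin.last m) := by
  intro h
  have hval : (ρ (Fin.last m)).val = m := by
    have h1 : (ρ (Fin.last m)).val ≤ m := Nat.lt_succ_iff.1 (ρ _).isLt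
    have h2 := val_le_of_isLRMax h
    simp only [Fin.val_last] at h2
    omega
  apply hI m hm le_rfl
  intro i hi
  have h1 : (ρ i).val ≤ m := Nat.lt_succ_iff.1 (ρ _).isLt
  rcases eq_or_lt_of_le h1 with heq | hlt
  · exfalso
    have : ρ i = ρ (Fin.last m) := Fin.ext (by omega)
    have := ρ.injective this
    rw [this] at hi
    simp at hi
  · exact hlt

include hA hI hm in
lemma first_nonmax_val_zero {x : Fin (m + 1)} (hx : ¬ IsLRMax ρ x)
    (hall : ∀ q : Fin (m + 1), q.val < x.val → IsLRMax ρ q) : ρ x = 0 := by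
  set q0 := ρ.symm 0 with hq0def
  have hq0 : ρ q0 = 0 := ρ.apply_symm_apply 0
  have hq0nm : ¬ IsLRMax ρ q0 := by
    intro h
    have := rho_lrm_pos hI hm h
    rw [hq0] at this
    simp at this
  have hxq : x.val ≤ q0.val := by
    by_contra hc
    push_neg at hc
    exact hq0nm (hall q0 hc)
  rcases eq_or_lt_of_le hxq with heq | hlt
  · have : x = q0 := Fin.ext heq
    rw [this, hq0]
  · exfalso
    have := avoids_nonmax_lt hA (show x < q0 from hlt) hx
    rw [hq0] at this
    exact absurd this (by simp [Fin.lt_def])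

include hA hI in
lemma key2 {u i w : Fin (m + 1)} (hu : ¬ IsLRMax ρ u) (hiu : i < u)
    (hrun : ∀ x, i < x → x < u → IsLRMax ρ x) (hbd : ∀ x, x ≤ i → ρ x ≤ w) :
    ρ u ≤ w := by
  by_contra hwu
  push_neg at hwu
  set C := univ.filter (fun x : Fin (m + 1) => x < u ∧ ρ u < ρ x) with hC
  have hCne : C.Nonempty := by
    obtain ⟨k, hk, hks⟩ : ∃ k, k ≤ u ∧ ¬ ρ k ≤ ρ u := by
      by_contra hc; push_neg at hc; exact hu fun y hy => hc y hy
    have hku : k < u := by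
      rcases eq_or_lt_of_le hk with rfl | h
      · exact absurd le_rfl hks
      · exact h
    exact ⟨k, by simp [hC, hku, not_le.1 hks]⟩
  set k0 := C.min' hCne with hk0def
  have hk0 : k0 < u ∧ ρ u < ρ k0 := by
    have := Finset.min'_mem C hCne
    simpa [hC] using this
  have hCi : ∀ x, x < u → ρ u < ρ x → i < x := by
    intro x h1 h2
    by_contra hc
    push_neg at hc
    have := hbd x hc
    have h3 : (ρ x).val ≤ w.val := this
    have h4 : w.val < (ρ u).val := hwu
    have h5 : (ρ u).val < (ρ x).val := h2
    omega
  have hB : ∀ q, ρ q < ρ u → q < u := by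
    intro q hq
    rcases lt_trichotomy q u with h | h | h
    · exact h
    · rw [h] at hq; exact absurd hq (lt_irrefl _)
    · exact absurd ⟨k0, u, q, hk0.1, h, hq, hk0.2⟩ hA
  have hiff : ∀ q : Fin (m + 1), q.val < k0.val ↔ (ρ q).val < (ρ u).val := by
    intro q
    constructor
    · intro h
      have hqu : q < u := lt_trans (show q < k0 from h) hk0.1
      rcases lt_trichotomy (ρ q) (ρ u) with h1 | h1 | h1
      · exact h1
      · exact absurd (ρ.injective h1) (by rintro rfl; exact absurd hqu (lt_irrefl _))
      · exfalso
        have hqC : q ∈ C := by simp [hC, hqu, h1]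
        have := Finset.min'_le C q hqC
        rw [← hk0def] at this
        have : k0.val ≤ q.val := this
        omega
    · intro h
      have hqu : q < u := hB q h
      by_contra hc
      push_neg at hc
      have hiq : i < q := lt_of_lt_of_le (hCi k0 hk0.1 hk0.2) hc
      have hqL : IsLRMax ρ q := hrun q hiq hqu
      have h5 : ρ k0 ≤ ρ q := hqL k0 hc
      have h6 : (ρ u).val < (ρ k0).val := hk0.2
      have h7 : (ρ k0).val ≤ (ρ q).val := h5
      omega
  have hcard : k0.val = (ρ u).val := by
    have h1 := card_filter_lt k0
    have h2 := card_filter_apply_lt ρ (ρ u)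
    have heq : (univ.filter (fun q : Fin (m + 1) => q < k0))
        = univ.filter (fun q : Fin (m + 1) => ρ q < ρ u) := by
      ext q
      simp only [Finset.mem_filter, Finset.mem_univ, true_and, Fin.lt_def]
      exact hiff q
    rw [heq] at h1
    omega
  refine hI k0.val ?_ ?_ ?_
  · have : w.val < (ρ u).val := hwu
    omega
  · have h1 : k0.val < u.val := hk0.1
    have h2 : u.val ≤ m := Nat.lt_succ_iff.1 u.isLt
    omega
  · intro q hq
    rw [hcard] at hq ⊢
    exact (hiff q).1 (by omega)

include hA hI hm in
lemma psi_lrm_of {i : Fin m} (h : IsLRMax ρ i.castSucc) :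
    ∀ j : Fin m, j ≤ i → psiFun ρ j ≤ psiFun ρ i := by
  have hlast := not_lrm_last hI hm
  intro j hj
  rw [psiFun, psiFun, if_pos h]
  by_cases hL : IsLRMax ρ j.castSucc
  · rw [if_pos hL]
    have := h j.castSucc (by
      rw [Fin.le_def]
      simpa using hj)
    have hv : (ρ j.castSucc).val ≤ (ρ i.castSucc).val := this
    exact Fin.mk_le_mk.2 (by omega)
  · rw [if_neg hL]
    set u := nextNM ρ j.val with hu
    have humem := nextNM_mem hlast j.isLt
    rw [← hu] at humem
    rw [mem_nnS] at humem
    have hru : (ρ u).val ≤ (ρ i.castSucc).val := by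
      rcases le_or_gt u i.castSucc with hle | hgt
      · exact h u hle
      · refine key2 hA hI humem.2 hgt (fun x hx1 hx2 => ?_) h
        by_contra hc
        have hxS : x ∈ nnS ρ j.val := by
          rw [mem_nnS]
          refine ⟨?_, hc⟩
          have h1 : i.val < x.val := hx1
          have h2 : j.val ≤ i.val := hj
          omega
        have := nextNM_min hlast j.isLt hxS
        rw [← hu] at this
        exact absurd hx2 (not_lt.2 this)
    rw [hu] at hru
    exact Fin.mk_le_mk.2 (by omega)

include hA hI hm in
lemma psi_nonlrm_of {i : Fin m} (h : ¬ IsLRMax ρ i.castSucc) :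
    ∃ j : Fin m, j ≤ i ∧ ¬ (psiFun ρ j ≤ psiFun ρ i) := by
  have hlast := not_lrm_last hI hm
  obtain ⟨ks, hksle, hksL, hksmax⟩ := exists_argmax ρ i.castSucc
  have hlt : ρ i.castSucc < ρ ks := by
    obtain ⟨k, hk, hks⟩ : ∃ k, k ≤ i.castSucc ∧ ¬ ρ k ≤ ρ i.castSucc := by
      by_contra hc; push_neg at hc; exact h fun y hy => hc y hy
    exact lt_of_lt_of_le (not_le.1 hks) (hksmax k hk)
  set u := nextNM ρ i.val with hu
  have humem := nextNM_mem hlast i.isLt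
  rw [← hu, mem_nnS] at humem
  have hicsu : i.castSucc < u := by
    rw [Fin.lt_def]
    simpa using humem.1
  have hru : ρ u ≤ ρ ks := by
    refine key2 hA hI humem.2 hicsu (fun x hx1 hx2 => ?_) hksmax
    by_contra hc
    have hxS : x ∈ nnS ρ i.val := by
      rw [mem_nnS]
      exact ⟨Fin.lt_def.1 hx1, hc⟩
    have := nextNM_min hlast i.isLt hxS
    rw [← hu] at this
    exact absurd hx2 (not_lt.2 this)
  have hne : u ≠ ks := by
    intro hcc; rw [hcc] at humem; exact humem.2 hksL
  have hstrict : (ρ u).val < (ρ ks).val := by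
    have h1 : (ρ u).val ≤ (ρ ks).val := hru
    have h2 : ρ u ≠ ρ ks := fun hc => hne (ρ.injective hc)
    have h3 : (ρ u).val ≠ (ρ ks).val := fun hc => h2 (Fin.ext hc)
    omega
  have hrupos : 0 < (ρ u).val := by
    have := avoids_nonmax_lt hA hicsu h
    have h4 : (ρ i.castSucc).val < (ρ u).val := this
    omega
  have hksm : ks.val < m := by
    have h1 : ks.val ≤ i.val := hksle
    have := i.isLt
    omega
  refine ⟨⟨ks.val, hksm⟩, show ks.val ≤ i.val from hksle, ?_⟩
  have hcs : (⟨ks.val, hksm⟩ : Fin m).castSucc = ks := Fin.ext rfl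
  rw [psiFun, psiFun, if_neg h]
  simp only [hcs]
  rw [if_pos hksL, hu] at *
  rw [not_le]
  exact Fin.mk_lt_mk.2 (by omega)

end psiContext

end Stmt16
namespace Stmt16
open Equiv

variable {m : ℕ}

section psiContext2

variable {ρ : Equiv.Perm (Fin (m + 1))} (hA : Avoids321 ρ)
  (hI : ∀ j, 0 < j → j ≤ m → ¬ SplitAt ρ j) (hm : 0 < m)

include hA hI hm in
lemma nextNM_val_pos {i : Fin m} (hi : ¬ IsLRMax ρ i.castSucc) :
    0 < (ρ (nextNM ρ i.val)).val := by
  have hlast := not_lrm_last hI hm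
  have humem := nextNM_mem hlast i.isLt
  rw [mem_nnS] at humem
  have hlt : i.castSucc < nextNM ρ i.val := by
    rw [Fin.lt_def]; simpa using humem.1
  have := avoids_nonmax_lt hA hlt hi
  have h2 : (ρ i.castSucc).val < (ρ (nextNM ρ i.val)).val := this
  omega

include hA hI hm in
lemma psiFun_injective : Function.Injective (psiFun ρ) := by
  have hlast := not_lrm_last hI hm
  have main : ∀ i j : Fin m, i.val < j.val → psiFun ρ i ≠ psiFun ρ j := by
    intro i j hlt heq
    rw [psiFun, psiFun] at heq
    by_cases hiL : IsLRMax ρ i.castSucc <;> by_cases hjL : IsLRMax ρ j.castSucc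
    · rw [if_pos hiL, if_pos hjL] at heq
      have hv := congrArg Fin.val heq
      simp only at hv
      have h1 := rho_lrm_pos hI hm hiL
      have h2 := rho_lrm_pos hI hm hjL
      have hcs : ρ i.castSucc = ρ j.castSucc := Fin.ext (by omega)
      have hcs2 := ρ.injective hcs
      have : i.val = j.val := congrArg Fin.val (Fin.castSucc_injective m hcs2)
      omega
    · rw [if_pos hiL, if_neg hjL] at heq
      have hv := congrArg Fin.val heq
      simp only at hv
      have h1 := rho_lrm_pos hI hm hiL
      have h2 := nextNM_val_pos hA hI hm hjL
      have heq2 : ρ i.castSucc = ρ (nextNM ρ j.val) := Fin.ext (by omega)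
      have heq3 := ρ.injective heq2
      have humem := nextNM_mem hlast j.isLt
      rw [mem_nnS] at humem
      rw [← heq3] at humem
      exact humem.2 hiL
    · rw [if_neg hiL, if_pos hjL] at heq
      have hv := congrArg Fin.val heq
      simp only at hv
      have h1 := rho_lrm_pos hI hm hjL
      have h2 := nextNM_val_pos hA hI hm hiL
      have heq2 : ρ (nextNM ρ i.val) = ρ j.castSucc := Fin.ext (by omega)
      have heq3 := ρ.injective heq2
      have humem := nextNM_mem hlast i.isLt
      rw [mem_nnS] at humem
      rw [heq3] at humem
      exact humem.2 hjL
    · rw [if_neg hiL, if_neg hjL] at heq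
      have hv := congrArg Fin.val heq
      simp only at hv
      have h1 := nextNM_val_pos hA hI hm hiL
      have h2 := nextNM_val_pos hA hI hm hjL
      have heq2 : ρ (nextNM ρ i.val) = ρ (nextNM ρ j.val) := Fin.ext (by omega)
      have heq3 := ρ.injective heq2
      -- nextNM ρ i.val ≤ j.castSucc < nextNM ρ j.val
      have hjin : j.castSucc ∈ nnS ρ i.val := mem_nnS.2 ⟨by simpa using hlt, hjL⟩
      have hle := nextNM_min hlast i.isLt hjin
      have humem := nextNM_mem hlast j.isLt
      rw [mem_nnS] at humem
      have hlt2 : (nextNM ρ i.val).val < (nextNM ρ j.val).val := by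
        have ha : (nextNM ρ i.val).val ≤ j.val := by simpa [Fin.le_def] using hle
        have hb : j.val < (nextNM ρ j.val).val := humem.1
        omega
      rw [heq3] at hlt2
      omega
  intro x y h
  by_contra hne
  rcases Nat.lt_trichotomy x.val y.val with hc | hc | hc
  · exact main x y hc h
  · exact hne (Fin.ext hc)
  · exact main y x hc h.symm

/-- the inverse construction: `psi ρ` recovers `τ` from an indecomposable `ρ`. -/
noncomputable def psi : Equiv.Perm (Fin m) :=
  Equiv.ofBijective (psiFun ρ) (Finite.injective_iff_bijective.1 (psiFun_injective hA hI hm))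

lemma psi_apply (i : Fin m) : psi hA hI hm i = psiFun ρ i := rfl

include hA hI hm in
lemma isLRMax_psi_iff (i : Fin m) : IsLRMax (psi hA hI hm) i ↔ IsLRMax ρ i.castSucc := by
  constructor
  · intro h
    by_contra hn
    obtain ⟨j, hj, hnle⟩ := psi_nonlrm_of hA hI hm hn
    exact hnle (h j hj)
  · intro h j hj
    exact psi_lrm_of hA hI hm h j hj

include hA hI hm in
lemma avoids_psi : Avoids321 (psi hA hI hm) := by
  have hlast := not_lrm_last hI hm
  apply avoids_of_nonmax_mono
  intro i j hij hi hj
  rw [isLRMax_psi_iff hA hI hm] at hi hj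
  show psiFun ρ i < psiFun ρ j
  rw [psiFun, psiFun, if_neg hi, if_neg hj]
  have h1 := nextNM_val_pos hA hI hm hi
  have hjin : j.castSucc ∈ nnS ρ i.val := mem_nnS.2 ⟨by
    rw [Fin.lt_def] at hij; simpa using hij, hj⟩
  have hle := nextNM_min hlast i.isLt hjin
  have humem := nextNM_mem hlast j.isLt
  rw [mem_nnS] at humem
  have hlt2 : nextNM ρ i.val < nextNM ρ j.val := by
    rw [Fin.lt_def]
    have ha : (nextNM ρ i.val).val ≤ j.val := by simpa [Fin.le_def] using hle
    have hb : j.val < (nextNM ρ j.val).val := humem.1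
    omega
  have humem1 := nextNM_mem hlast i.isLt
  rw [mem_nnS] at humem1
  have := avoids_nonmax_lt hA hlt2 humem1.2
  have h3 : (ρ (nextNM ρ i.val)).val < (ρ (nextNM ρ j.val)).val := this
  exact Fin.mk_lt_mk.2 (by omega)

include hA hI hm in
lemma phi_psi : phi (psi hA hI hm) = ρ := by
  set τ := psi hA hI hm with hτdef
  have hiff : ∀ p : Fin m, IsLRMax τ p ↔ IsLRMax ρ p.castSucc := isLRMax_psi_iff hA hI hm
  have hτ : ∀ p : Fin m, τ p = psiFun ρ p := fun p => rfl
  have hlast := not_lrm_last hI hm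
  apply Equiv.ext
  intro x
  rw [phi_apply]
  rcases Fin.eq_castSucc_or_eq_last x with ⟨j, rfl⟩ | rfl
  · by_cases hL : IsLRMax ρ j.castSucc
    · rw [phiFun_lrm ((hiff j).2 hL)]
      have h1 := rho_lrm_pos hI hm hL
      apply Fin.ext
      rw [Fin.val_succ, hτ, psiFun, if_pos hL]
      simp only
      omega
    · rw [phiFun_nonlrm (fun hc => hL ((hiff j).1 hc))]
      rcases hmax : (nmB τ j.val).max with _ | p
      · rw [prevVal_empty hmax]
        refine (first_nonmax_val_zero hA hI hm hL (fun q hq => ?_)).symm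
        have hqm : q.val < m := lt_of_lt_of_le (by simpa using hq) (Nat.lt_succ_iff.1 j.castSucc.isLt)
        have hqcs : (⟨q.val, hqm⟩ : Fin m).castSucc = q := Fin.ext rfl
        by_contra hqn
        have hqn' : ¬ IsLRMax τ ⟨q.val, hqm⟩ := by
          rw [hiff, hqcs]; exact hqn
        have hmem : (⟨q.val, hqm⟩ : Fin m) ∈ nmB τ j.val :=
          mem_nmB.2 ⟨by simpa using hq, hqn'⟩
        have := Finset.le_max hmem
        rw [hmax] at this
        exact absurd this (WithBot.not_coe_le_bot _)
      · rw [prevVal_some hmax]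
        have hspec := nmB_max_spec hmax
        have hpns : ¬ IsLRMax ρ p.castSucc := fun hc => hspec.1.2 ((hiff p).2 hc)
        have hjin : j.castSucc ∈ nnS ρ p.val := mem_nnS.2 ⟨by simpa using hspec.1.1, hL⟩
        have hle := nextNM_min hlast (lt_of_lt_of_le hspec.1.1 (Nat.lt_succ_iff.1 j.castSucc.isLt)) hjin
        have hpm : p.val < m := lt_of_lt_of_le hspec.1.1 (Nat.lt_succ_iff.1 j.castSucc.isLt)
        have hup : nextNM ρ p.val = j.castSucc := by
          rcases eq_or_lt_of_le hle with h | h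
          · exact h
          · exfalso
            have humem := nextNM_mem hlast hpm
            rw [mem_nnS] at humem
            have hud : (nextNM ρ p.val).val < m := by
              have : (nextNM ρ p.val).val < j.castSucc.val := h
              have := Nat.lt_succ_iff.1 j.castSucc.isLt
              simp only [Fin.coe_castSucc] at *
              omega
            have hum : (⟨(nextNM ρ p.val).val, hud⟩ : Fin m).castSucc = nextNM ρ p.val :=
              Fin.ext rfl
            have humn : ¬ IsLRMax τ ⟨(nextNM ρ p.val).val, hud⟩ := by
              rw [hiff, hum]; exact humem.2
            have hmem2 : (⟨(nextNM ρ p.val).val, hud⟩ : Fin m) ∈ nmB τ j.val :=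
              mem_nmB.2 ⟨by
                have : (nextNM ρ p.val).val < j.castSucc.val := h
                simpa using this, humn⟩
            have := hspec.2 _ (mem_nmB.1 hmem2).1 (mem_nmB.1 hmem2).2
            have hc1 : (nextNM ρ p.val).val ≤ p.val := this
            have hc2 : p.val < (nextNM ρ p.val).val := humem.1
            omega
        have hval : 0 < (ρ j.castSucc).val := by
          have hplt : p.castSucc < j.castSucc := by
            rw [Fin.lt_def]; simpa using hspec.1.1
          have := avoids_nonmax_lt hA hplt hpns
          have h5 : (ρ p.castSucc).val < (ρ j.castSucc).val := this
          omega
        apply Fin.ext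
        rw [Fin.val_succ, hτ, psiFun, if_neg hpns]
        simp only
        rw [hup]
        omega
  · rw [phiFun_last]
    rcases hmax : (nmB τ m).max with _ | p
    · rw [prevVal_empty hmax]
      refine (first_nonmax_val_zero hA hI hm hlast (fun q hq => ?_)).symm
      have hqm : q.val < m := by simpa using hq
      have hqcs : (⟨q.val, hqm⟩ : Fin m).castSucc = q := Fin.ext rfl
      by_contra hqn
      have hqn' : ¬ IsLRMax τ ⟨q.val, hqm⟩ := by
        rw [hiff, hqcs]; exact hqn
      have hmem : (⟨q.val, hqm⟩ : Fin m) ∈ nmB τ m := mem_nmB.2 ⟨hqm, hqn'⟩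
      have := Finset.le_max hmem
      rw [hmax] at this
      exact absurd this (WithBot.not_coe_le_bot _)
    · rw [prevVal_some hmax]
      have hspec := nmB_max_spec hmax
      have hpm : p.val < m := hspec.1.1
      have hpns : ¬ IsLRMax ρ p.castSucc := fun hc => hspec.1.2 ((hiff p).2 hc)
      have hjin : Fin.last m ∈ nnS ρ p.val := mem_nnS.2 ⟨by simpa using hpm, hlast⟩
      have hle := nextNM_min hlast hpm hjin
      have hup : nextNM ρ p.val = Fin.last m := by
        rcases eq_or_lt_of_le hle with h | h
        · exact h
        · exfalso
          have humem := nextNM_mem hlast hpm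
          rw [mem_nnS] at humem
          have hud : (nextNM ρ p.val).val < m := by
            have : (nextNM ρ p.val).val < (Fin.last m).val := h
            simpa using this
          have hum : (⟨(nextNM ρ p.val).val, hud⟩ : Fin m).castSucc = nextNM ρ p.val :=
            Fin.ext rfl
          have humn : ¬ IsLRMax τ ⟨(nextNM ρ p.val).val, hud⟩ := by
            rw [hiff, hum]; exact humem.2
          have hmem2 : (⟨(nextNM ρ p.val).val, hud⟩ : Fin m) ∈ nmB τ m :=
            mem_nmB.2 ⟨hud, humn⟩
          have := hspec.2 _ (mem_nmB.1 hmem2).1 (mem_nmB.1 hmem2).2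
          have hc1 : (nextNM ρ p.val).val ≤ p.val := this
          have hc2 : p.val < (nextNM ρ p.val).val := humem.1
          omega
      have hval : 0 < (ρ (Fin.last m)).val := by
        have hplt : p.castSucc < Fin.last m := by
          rw [Fin.lt_def]; simpa using hpm
        have := avoids_nonmax_lt hA hplt hpns
        have h5 : (ρ p.castSucc).val < (ρ (Fin.last m)).val := this
        omega
      apply Fin.ext
      rw [Fin.val_succ, hτ, psiFun, if_neg hpns]
      simp only
      rw [hup]
      omega

end psiContext2

lemma psiFun_phi {τ : Equiv.Perm (Fin m)} (hA : Avoids321 τ) (hm : 0 < m) (i : Fin m) :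
    psiFun (phi τ) i = τ i := by
  have hlast := not_isLRMax_phi_last (τ := τ) hm
  by_cases hL : IsLRMax τ i
  · rw [psiFun, if_pos (isLRMax_phi_of hL)]
    apply Fin.ext
    simp only
    rw [phi_apply, phiFun_lrm hL, Fin.val_succ]
    omega
  · rw [psiFun, if_neg (by
      intro hc
      rw [isLRMax_phi_iff] at hc
      exact hL hc)]
    have humem := nextNM_mem hlast i.isLt
    rw [mem_nnS] at humem
    have hval : (phi τ) (nextNM (phi τ) i.val) = (τ i).succ := by
      rw [phi_nonmax_eq humem.2]
      have hmax : (nmB τ (nextNM (phi τ) i.val).val).max = some i := by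
        apply nmB_max_eq
        · exact mem_nmB.2 ⟨humem.1, hL⟩
        · intro q hq
          rw [mem_nmB] at hq
          by_contra hc
          push_neg at hc
          have hiq : i.val < q.val := hc
          have hqnn : ¬ IsLRMax (phi τ) q.castSucc := by
            rw [isLRMax_phi_iff]; exact hq.2
          have hqin : q.castSucc ∈ nnS (phi τ) i.val := mem_nnS.2 ⟨by simpa using hiq, hqnn⟩
          have := nextNM_min hlast i.isLt hqin
          have h1 : (nextNM (phi τ) i.val).val ≤ q.val := by simpa [Fin.le_def] using this
          have h2 : q.val < (nextNM (phi τ) i.val).val := hq.1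
          omega
      rw [prevVal_some hmax]
    apply Fin.ext
    simp only
    rw [hval, Fin.val_succ]
    omega

end Stmt16
namespace Stmt16
open Equiv

lemma mem_Av_iff {n : ℕ} {σ : Equiv.Perm (Fin n)} : σ ∈ Av n ↔ Avoids321 σ := by
  simp [Av]

lemma indSum (m : ℕ) (hm : 0 < m) :
    ∑ ρ ∈ (Av (m + 1)).filter (fun ρ => fsp ρ = m + 1), wt ρ
      = ∑ τ ∈ Av m, X 0 ^ (invPerm τ + lrm τ) * X 1 ^ lrm τ := by
  symm
  apply Finset.sum_bij (i := fun τ (_ : τ ∈ Av m) => phi τ)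
  · intro τ hτ
    rw [Finset.mem_filter]
    rw [mem_Av_iff] at hτ
    exact ⟨mem_Av_iff.2 (avoids_phi hτ), fsp_phi τ⟩
  · intro τ1 h1 τ2 h2 heq
    rw [mem_Av_iff] at h1 h2
    apply Equiv.ext; intro i
    rw [← psiFun_phi h1 hm i, ← psiFun_phi h2 hm i, heq]
  · intro ρ hρ
    rw [Finset.mem_filter, mem_Av_iff] at hρ
    obtain ⟨hA, hfsp⟩ := hρ
    have hI : ∀ j, 0 < j → j ≤ m → ¬ SplitAt ρ j := by
      intro j hj hjm
      exact ((fsp_eq_iff (by omega)).1 hfsp).2 j hj (by omega)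
    exact ⟨psi hA hI hm, mem_Av_iff.2 (avoids_psi hA hI hm), phi_psi hA hI hm⟩
  · intro τ hτ
    rw [mem_Av_iff] at hτ
    rw [wt, inv_phi hτ hm, lrm_phi τ hm]

lemma fiberSum (a b : ℕ) (ha : 0 < a) :
    ∑ σ ∈ (Av (a + b)).filter (fun σ => fsp σ = a), wt σ
      = (∑ ρ ∈ (Av a).filter (fun ρ => fsp ρ = a), wt ρ) * ∑ π ∈ Av b, wt π := by
  rw [Finset.sum_mul_sum, ← Finset.sum_product']
  symm
  apply Finset.sum_bij
    (i := fun (p : Equiv.Perm (Fin a) × Equiv.Perm (Fin b))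
      (_ : p ∈ ((Av a).filter (fun ρ => fsp ρ = a)) ×ˢ Av b) => dsum p.1 p.2)
  · rintro ⟨ρ, π⟩ hp
    rw [Finset.mem_product, Finset.mem_filter, mem_Av_iff, mem_Av_iff] at hp
    rw [Finset.mem_filter, mem_Av_iff]
    exact ⟨avoids_dsum_iff.2 ⟨hp.1.1, hp.2⟩, by rw [fsp_dsum _ _ ha]; exact hp.1.2⟩
  · rintro ⟨ρ1, π1⟩ h1 ⟨ρ2, π2⟩ h2 heq
    have hL : ∀ i : Fin a, ρ1 i = ρ2 i := by
      intro i
      have hx := Equiv.ext_iff.1 heq (Fin.castAdd b i)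
      rw [dsum_castAdd, dsum_castAdd] at hx
      exact Fin.castAdd_injective a b hx
    have hR : ∀ i : Fin b, π1 i = π2 i := by
      intro i
      have hx := Equiv.ext_iff.1 heq (Fin.natAdd a i)
      rw [dsum_natAdd, dsum_natAdd] at hx
      have := congrArg Fin.val hx
      simp only [Fin.coe_natAdd] at this
      exact Fin.ext (by omega)
    have : ρ1 = ρ2 := Equiv.ext hL
    have : π1 = π2 := Equiv.ext hR
    simp_all
  · intro σ hσ
    rw [Finset.mem_filter, mem_Av_iff] at hσ
    obtain ⟨hA, hfsp⟩ := hσ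
    have hsp : SplitAt σ a := by
      have := splitAt_fsp σ
      rwa [hfsp] at this
    have hds := dsum_res hsp
    have hAv : Avoids321 (dsum (resL σ hsp) (resR σ hsp)) := by rw [hds]; exact hA
    obtain ⟨hA1, hA2⟩ := avoids_dsum_iff.1 hAv
    have hfspL : fsp (resL σ hsp) = a := by
      have := fsp_dsum (resL σ hsp) (resR σ hsp) ha
      rw [hds, hfsp] at this
      exact this.symm
    refine ⟨(resL σ hsp, resR σ hsp), ?_, hds⟩
    rw [Finset.mem_product, Finset.mem_filter, mem_Av_iff, mem_Av_iff]
    exact ⟨⟨hA1, hfspL⟩, hA2⟩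
  · rintro ⟨ρ, π⟩ hp
    rw [Finset.mem_product, Finset.mem_filter, mem_Av_iff, mem_Av_iff] at hp
    rw [wt, wt, wt, inv_dsum hp.1.1 hp.2, lrm_dsum, pow_add, pow_add]
    ring

lemma subT_IPoly (k : ℕ) :
    subT 1 (IPoly k) = ∑ τ ∈ Av k, X 0 ^ (invPerm τ + lrm τ) * X 1 ^ lrm τ := by
  rw [IPoly, subT, map_sum]
  refine Finset.sum_congr rfl fun τ _ => ?_
  rw [map_mul, map_pow, map_pow, bind₁_X_right, bind₁_X_right]
  have e0 : (if (0 : Fin 2) = 0 then (X 0 : MvPolynomial (Fin 2) ℤ) else X 0 ^ 1 * X 1)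
      = X 0 := if_pos rfl
  have e1 : (if (1 : Fin 2) = 0 then (X 0 : MvPolynomial (Fin 2) ℤ) else X 0 ^ 1 * X 1)
      = X 0 ^ 1 * X 1 := if_neg (by decide)
  rw [e0, e1, mul_pow, pow_one, pow_add]
  ring

lemma avOne : (Av 1).filter (fun ρ => fsp ρ = 1) = {(1 : Equiv.Perm (Fin 1))} := by
  ext ρ
  rw [Finset.mem_filter, mem_Av_iff, Finset.mem_singleton]
  constructor
  · intro _
    exact Subsingleton.elim ρ 1
  · rintro rfl
    refine ⟨?_, ?_⟩
    · rintro ⟨i, j, k, hij, -, -, -⟩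
      rw [Subsingleton.elim i j] at hij
      exact absurd hij (lt_irrefl _)
    · have h1 : fsp (1 : Equiv.Perm (Fin 1)) ≤ 1 := fsp_le one_pos (fun i _ => i.isLt)
      have h2 := fsp_pos (1 : Equiv.Perm (Fin 1))
      omega

lemma wtOne : wt (1 : Equiv.Perm (Fin 1)) = X 1 := by
  have hinv : invPerm (1 : Equiv.Perm (Fin 1)) = 0 := by
    rw [invPerm, Finset.card_eq_zero, Finset.filter_eq_empty_iff]
    rintro ⟨p1, p2⟩ -
    rintro ⟨h1, -⟩
    rw [Subsingleton.elim p1 p2] at h1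
    exact absurd h1 (lt_irrefl _)
  have hlrm : lrm (1 : Equiv.Perm (Fin 1)) = 1 := by
    rw [lrm]
    have : (univ : Finset (Fin 1)).filter (IsLRMax (1 : Equiv.Perm (Fin 1))) = univ := by
      apply Finset.filter_true_of_mem
      intro i _ j hj
      rw [Subsingleton.elim j i]
    rw [this]
    simp
  rw [wt, hinv, hlrm, pow_zero, pow_one, one_mul]

end Stmt16
/-- for n ≥ 1,
`I_n(q,t) = t·I_{n-1}(q,t) + Σ_{k=0}^{n-2} I_k(q,t)·I_{n-1-k}(q,qt)`. -/
theorem stmt16 (n : ℕ) (hn : 1 ≤ n) :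
    IPoly n = X 1 * IPoly (n - 1) +
      ∑ k ∈ Finset.range (n - 1), IPoly k * subT 1 (IPoly (n - 1 - k)) := by
  classical
  rw [Stmt16.IPoly_eq]
  have hmaps : ∀ σ ∈ Av n, Stmt16.fsp σ ∈ Finset.Icc 1 n := fun σ _ =>
    Finset.mem_Icc.2 ⟨Stmt16.fsp_pos σ, Stmt16.fsp_le_n hn⟩
  rw [← Finset.sum_fiberwise_of_maps_to hmaps Stmt16.wt]
  have hterm : ∀ j ∈ Finset.Icc 1 n,
      (∑ σ ∈ (Av n).filter (fun σ => Stmt16.fsp σ = j), Stmt16.wt σ)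
      = (∑ ρ ∈ (Av j).filter (fun ρ => Stmt16.fsp ρ = j), Stmt16.wt ρ)
          * ∑ π ∈ Av (n - j), Stmt16.wt π := by
    intro j hj
    rw [Finset.mem_Icc] at hj
    obtain ⟨b, rfl⟩ : ∃ b, n = j + b := ⟨n - j, by omega⟩
    have hb : j + b - j = b := by omega
    rw [hb]
    exact Stmt16.fiberSum j b (by omega)
  rw [Finset.sum_congr rfl hterm]
  have hsplit : Finset.Icc 1 n = insert 1 (Finset.Icc 2 n) := by
    ext x
    simp only [Finset.mem_Icc, Finset.mem_insert]
    omega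
  rw [hsplit, Finset.sum_insert (by simp)]
  congr 1
  · rw [Stmt16.avOne, Finset.sum_singleton, Stmt16.wtOne, Stmt16.IPoly_eq]
  · apply Finset.sum_bij' (i := fun j (_ : j ∈ Finset.Icc 2 n) => n - j)
      (j := fun k (_ : k ∈ Finset.range (n - 1)) => n - k)
    · intro j hj
      rw [Finset.mem_Icc] at hj
      rw [Finset.mem_range]
      omega
    · intro k hk
      rw [Finset.mem_range] at hk
      rw [Finset.mem_Icc]
      omega
    · intro j hj
      rw [Finset.mem_Icc] at hj
      omega
    · intro k hk
      rw [Finset.mem_range] at hk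
      omega
    · intro j hj
      rw [Finset.mem_Icc] at hj
      obtain ⟨m, rfl⟩ : ∃ m, j = m + 1 := ⟨j - 1, by omega⟩
      rw [Stmt16.indSum m (by omega), ← Stmt16.subT_IPoly m]
      have h1 : n - 1 - (n - (m + 1)) = m := by omega
      rw [h1, ← Stmt16.IPoly_eq, mul_comm]
end

section
/- For every integer n ≥ 1, Σ_{σ∈Av_{2n}(321)} (−1)^{inv σ} = 0 and Σ_{σ∈Av_{2n+1}(321)} (−1)^{inv σ} = C_n, where C_n = (1/(n+1))·binom(2n,n) is the n-th Catalan number. -/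
open Finset MvPolynomial

/-! ### Auxiliary development for Statement 17 -/

section Stmt17Aux

open Equiv

variable {n : ℕ}

/-- Insert the largest value at position `p`. -/
def insPerm (σ : Equiv.Perm (Fin n)) (p : Fin (n + 1)) : Equiv.Perm (Fin (n + 1)) :=
  (finSuccEquiv' p).trans ((σ.optionCongr).trans (finSuccEquiv' (Fin.last n)).symm)

lemma insPerm_self (σ : Equiv.Perm (Fin n)) (p : Fin (n + 1)) :
    insPerm σ p p = Fin.last n := by
  simp [insPerm]

lemma insPerm_succAbove (σ : Equiv.Perm (Fin n)) (p : Fin (n + 1)) (a : Fin n) :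
    insPerm σ p (p.succAbove a) = (σ a).castSucc := by
  simp [insPerm, finSuccEquiv'_succAbove, finSuccEquiv'_symm_some, Fin.succAbove_last]

lemma insPerm_symm_last (σ : Equiv.Perm (Fin n)) (p : Fin (n + 1)) :
    (insPerm σ p).symm (Fin.last n) = p := by
  simp [insPerm, ← Equiv.optionCongr_symm]

/-- The permutation is increasing from (0-based) position `k` on. -/
def IncFrom (σ : Equiv.Perm (Fin n)) (k : ℕ) : Prop :=
  ∀ a b : Fin n, a < b → k ≤ a.val → σ a < σ b

instance (σ : Equiv.Perm (Fin n)) : DecidablePred (IncFrom σ) := fun k => by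
  unfold IncFrom; infer_instance

lemma incFrom_top (σ : Equiv.Perm (Fin n)) : IncFrom σ n :=
  fun a _ _ h => absurd a.isLt (by omega)

lemma IncFrom.mono {σ : Equiv.Perm (Fin n)} {k l : ℕ} (h : IncFrom σ k) (hkl : k ≤ l) :
    IncFrom σ l := fun a b hab ha => h a b hab (hkl.trans ha)

/-- The least `k` such that `σ` is increasing from position `k` on. -/
def minA (σ : Equiv.Perm (Fin n)) : ℕ := Nat.find ⟨n, incFrom_top σ⟩

lemma minA_le_iff {σ : Equiv.Perm (Fin n)} {k : ℕ} : minA σ ≤ k ↔ IncFrom σ k := by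
  constructor
  · intro h
    exact (Nat.find_spec (⟨n, incFrom_top σ⟩ : ∃ k, IncFrom σ k)).mono h
  · intro h
    exact Nat.find_le h

lemma minA_le (σ : Equiv.Perm (Fin n)) : minA σ ≤ n := minA_le_iff.mpr (incFrom_top σ)

lemma incFrom_minA (σ : Equiv.Perm (Fin n)) : IncFrom σ (minA σ) := minA_le_iff.mp le_rfl

lemma lt_succAbove_iff_val (p : Fin (n + 1)) (a : Fin n) :
    p < p.succAbove a ↔ p.val ≤ a.val := by
  rw [Fin.lt_succAbove_iff_le_castSucc, Fin.le_def, Fin.coe_castSucc]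

lemma invPerm_insPerm (σ : Equiv.Perm (Fin n)) (p : Fin (n + 1)) :
    invPerm (insPerm σ p) = invPerm σ + (n - p.val) := by
  classical
  set τ := insPerm σ p with hτ
  have hne : ∀ b : Fin (n + 1), p < b → τ b < τ p := by
    intro b hb
    rw [insPerm_self]
    have : τ b ≠ Fin.last n := by
      intro h
      have : b = p := by
        have := congrArg τ.symm h
        rwa [Equiv.symm_apply_apply, insPerm_symm_last] at this
      omega
    exact lt_of_le_of_ne (Fin.le_last _) this
  have h1 : ((univ.filter (fun q : Fin (n+1) × Fin (n+1) => q.1 < q.2 ∧ τ q.2 < τ q.1)).filter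
      (fun q => q.1 = p)).card = n - p.val := by
    have hcard := Fin.card_Ioi p
    have heq : ((univ.filter (fun q : Fin (n+1) × Fin (n+1) => q.1 < q.2 ∧ τ q.2 < τ q.1)).filter
      (fun q => q.1 = p)).card = (Finset.Ioi p).card := ?_
    · omega
    apply Finset.card_bij (i := fun q _ => q.2)
    · intro q hq
      simp only [Finset.mem_filter, Finset.mem_univ, true_and] at hq
      rw [Finset.mem_Ioi]
      rcases hq with ⟨⟨h1, _⟩, h2⟩
      rwa [h2] at h1
    · intro q hq q' hq' h
      simp only [Finset.mem_filter] at hq hq'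
      exact Prod.ext (hq.2.trans hq'.2.symm) h
    · intro b hb
      rw [Finset.mem_Ioi] at hb
      refine ⟨(p, b), ?_, rfl⟩
      simp only [Finset.mem_filter, Finset.mem_univ, true_and]
      exact ⟨⟨hb, hne b hb⟩, trivial⟩
  have h2 : ((univ.filter (fun q : Fin (n+1) × Fin (n+1) => q.1 < q.2 ∧ τ q.2 < τ q.1)).filter
      (fun q => ¬ q.1 = p)).card = invPerm σ := by
    rw [invPerm]
    symm
    apply Finset.card_bij (i := fun q _ => (p.succAbove q.1, p.succAbove q.2))
    · intro q hq
      simp only [Finset.mem_filter, Finset.mem_univ, true_and] at hq ⊢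
      refine ⟨⟨Fin.succAbove_lt_succAbove_iff.mpr hq.1, ?_⟩, Fin.succAbove_ne p q.1⟩
      rw [hτ, insPerm_succAbove, insPerm_succAbove]
      exact Fin.castSucc_lt_castSucc_iff.mpr hq.2
    · intro q hq q' hq' h
      have h1 := congrArg Prod.fst h
      have h2 := congrArg Prod.snd h
      simp only at h1 h2
      exact Prod.ext (Fin.succAbove_right_injective h1) (Fin.succAbove_right_injective h2)
    · intro q hq
      simp only [Finset.mem_filter, Finset.mem_univ, true_and] at hq
      rcases hq with ⟨⟨hlt, hval⟩, hq1⟩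
      have hq2 : q.2 ≠ p := by
        intro h
        rw [h, insPerm_self] at hval
        exact absurd hval (Fin.le_last _).not_gt
      obtain ⟨a, ha⟩ := Fin.exists_succAbove_eq hq1
      obtain ⟨b, hb⟩ := Fin.exists_succAbove_eq hq2
      refine ⟨(a, b), ?_, ?_⟩
      · simp only [Finset.mem_filter, Finset.mem_univ, true_and]
        constructor
        · rw [← Fin.succAbove_lt_succAbove_iff (p := p), ha, hb]
          exact hlt
        · rw [← Fin.castSucc_lt_castSucc_iff, ← insPerm_succAbove σ p, ← insPerm_succAbove σ p,
            ha, hb]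
          exact hval
      · simp only
        rw [ha, hb]
  have := Finset.card_filter_add_card_filter_not
    (s := univ.filter (fun q : Fin (n+1) × Fin (n+1) => q.1 < q.2 ∧ τ q.2 < τ q.1))
    (p := fun q => q.1 = p)
  rw [h1, h2] at this
  have hS : invPerm τ = (univ.filter
      (fun q : Fin (n+1) × Fin (n+1) => q.1 < q.2 ∧ τ q.2 < τ q.1)).card := rfl
  omega

lemma avoids_insPerm {σ : Equiv.Perm (Fin n)} {p : Fin (n + 1)} :
    Avoids321 (insPerm σ p) ↔ (Avoids321 σ ∧ IncFrom σ p.val) := by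
  constructor
  · intro h
    constructor
    · rintro ⟨i, j, k, hij, hjk, h1, h2⟩
      exact h ⟨p.succAbove i, p.succAbove j, p.succAbove k,
        Fin.succAbove_lt_succAbove_iff.mpr hij, Fin.succAbove_lt_succAbove_iff.mpr hjk,
        by rw [insPerm_succAbove, insPerm_succAbove]; exact Fin.castSucc_lt_castSucc_iff.mpr h1,
        by rw [insPerm_succAbove, insPerm_succAbove]; exact Fin.castSucc_lt_castSucc_iff.mpr h2⟩
    · intro a b hab ha
      by_contra hc
      have hba : σ b < σ a :=
        lt_of_le_of_ne (not_lt.mp hc) (fun h => absurd (σ.injective h) hab.ne')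
      exact h ⟨p, p.succAbove a, p.succAbove b, (lt_succAbove_iff_val p a).mpr ha,
        Fin.succAbove_lt_succAbove_iff.mpr hab,
        by rw [insPerm_succAbove, insPerm_succAbove]; exact Fin.castSucc_lt_castSucc_iff.mpr hba,
        by rw [insPerm_succAbove, insPerm_self]; exact Fin.castSucc_lt_last _⟩
  · rintro ⟨hav, hinc⟩ ⟨i, j, k, hij, hjk, h1, h2⟩
    have hj : j ≠ p := by
      intro h
      rw [h, insPerm_self] at h2
      exact absurd h2 (Fin.le_last _).not_gt
    have hk : k ≠ p := by
      intro h
      rw [h, insPerm_self] at h1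
      exact absurd h1 (Fin.le_last _).not_gt
    obtain ⟨b, hb⟩ := Fin.exists_succAbove_eq hj
    obtain ⟨c, hc⟩ := Fin.exists_succAbove_eq hk
    by_cases hi : i = p
    · subst hi
      rw [← hb, ← hc] at hjk h1
      rw [← hb] at hij
      have hbc : b < c := Fin.succAbove_lt_succAbove_iff.mp hjk
      have : σ c < σ b := by
        rw [insPerm_succAbove, insPerm_succAbove] at h1
        exact Fin.castSucc_lt_castSucc_iff.mp h1
      exact absurd (hinc b c hbc ((lt_succAbove_iff_val i b).mp hij)) this.asymm
    · obtain ⟨a, ha⟩ := Fin.exists_succAbove_eq hi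
      rw [← ha, ← hb] at hij
      rw [← hb, ← hc] at hjk
      rw [← hb, ← hc] at h1
      rw [← ha, ← hb] at h2
      rw [insPerm_succAbove, insPerm_succAbove] at h1 h2
      exact hav ⟨a, b, c, Fin.succAbove_lt_succAbove_iff.mp hij,
        Fin.succAbove_lt_succAbove_iff.mp hjk, Fin.castSucc_lt_castSucc_iff.mp h1,
        Fin.castSucc_lt_castSucc_iff.mp h2⟩

lemma succAbove_last_val (a : Fin n) : ((Fin.last n).succAbove a).val = a.val := by
  simp [Fin.succAbove_last]

lemma succAbove_val_or (p : Fin (n + 1)) (a : Fin n) :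
    (p.succAbove a).val = a.val ∨ (p.succAbove a).val = a.val + 1 := by
  rcases lt_or_ge (a.castSucc) p with h | h
  · left; rw [Fin.succAbove_of_castSucc_lt _ _ h]; simp
  · right; rw [Fin.succAbove_of_le_castSucc _ _ h]; simp

lemma minA_insPerm_last (σ : Equiv.Perm (Fin n)) :
    minA (insPerm σ (Fin.last n)) = minA σ := by
  apply le_antisymm
  · rw [minA_le_iff]
    intro a b hab ha
    by_cases hb : b = Fin.last n
    · subst hb
      have hane : a ≠ Fin.last n := ne_of_lt hab
      obtain ⟨a₀, ha₀⟩ := Fin.exists_succAbove_eq hane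
      rw [← ha₀, insPerm_succAbove, insPerm_self]
      exact Fin.castSucc_lt_last _
    · have hane : a ≠ Fin.last n := ne_of_lt (lt_of_lt_of_le hab (Fin.le_last b))
      obtain ⟨a₀, ha₀⟩ := Fin.exists_succAbove_eq hane
      obtain ⟨b₀, hb₀⟩ := Fin.exists_succAbove_eq hb
      rw [← ha₀, ← hb₀, insPerm_succAbove, insPerm_succAbove]
      apply Fin.castSucc_lt_castSucc_iff.mpr
      apply incFrom_minA σ a₀ b₀
      · rw [← Fin.succAbove_lt_succAbove_iff (p := Fin.last n), ha₀, hb₀]; exact hab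
      · have hv : ((Fin.last n).succAbove a₀).val = a₀.val := succAbove_last_val a₀
        rw [ha₀] at hv
        omega
  · rw [minA_le_iff]
    intro a b hab ha
    have h := incFrom_minA (insPerm σ (Fin.last n)) ((Fin.last n).succAbove a)
      ((Fin.last n).succAbove b) (Fin.succAbove_lt_succAbove_iff.mpr hab)
      (by rw [succAbove_last_val]; exact ha)
    rw [insPerm_succAbove, insPerm_succAbove] at h
    exact Fin.castSucc_lt_castSucc_iff.mp h

lemma minA_insPerm_of_lt {σ : Equiv.Perm (Fin n)} {p : Fin (n + 1)} (hp : p.val < n)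
    (h : IncFrom σ p.val) : minA (insPerm σ p) = p.val + 1 := by
  apply le_antisymm
  · rw [minA_le_iff]
    intro a b hab ha
    have hvab : a.val < b.val := hab
    have hane : a ≠ p := by intro hh; subst hh; omega
    have hbne : b ≠ p := by intro hh; subst hh; omega
    obtain ⟨a₀, ha₀⟩ := Fin.exists_succAbove_eq hane
    obtain ⟨b₀, hb₀⟩ := Fin.exists_succAbove_eq hbne
    rw [← ha₀, ← hb₀, insPerm_succAbove, insPerm_succAbove]
    apply Fin.castSucc_lt_castSucc_iff.mpr
    apply h a₀ b₀
    · rw [← Fin.succAbove_lt_succAbove_iff (p := p), ha₀, hb₀]; exact hab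
    · have hv := succAbove_val_or p a₀
      rw [ha₀] at hv
      omega
  · by_contra hc
    push_neg at hc
    have hinc : IncFrom (insPerm σ p) p.val := minA_le_iff.mp (by omega)
    have hpb : p < p.succAbove ⟨p.val, hp⟩ := (lt_succAbove_iff_val p _).mpr (le_refl _)
    have hlt := hinc p (p.succAbove ⟨p.val, hp⟩) hpb (le_refl _)
    rw [insPerm_self, insPerm_succAbove] at hlt
    exact absurd hlt (not_lt.mpr (Fin.le_last _))

lemma optionCongr_removeNone {α β : Type*} (e : Option α ≃ Option β) (h : e none = none) :
    Equiv.optionCongr (Equiv.removeNone e) = e := by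
  refine Equiv.ext fun x => ?_
  cases x with
  | none =>
    simp only [Equiv.optionCongr_apply, Option.map_none]
    exact h.symm
  | some a =>
    have h2 : ∃ b, e (some a) = some b := by
      cases hb : e (some a) with
      | none => exact absurd (e.injective (hb.trans h.symm)) (by simp)
      | some b => exact ⟨b, rfl⟩
    simp only [Equiv.optionCongr_apply, Option.map_some]
    exact Equiv.removeNone_some e h2

/-- Remove the largest value from a permutation of `Fin (n+1)`. -/
def remPerm (τ : Equiv.Perm (Fin (n + 1))) : Equiv.Perm (Fin n) :=
  Equiv.removeNone ((finSuccEquiv' (τ.symm (Fin.last n))).symm.trans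
    (τ.trans (finSuccEquiv' (Fin.last n))))

lemma remPerm_insPerm (σ : Equiv.Perm (Fin n)) (p : Fin (n + 1)) :
    remPerm (insPerm σ p) = σ := by
  unfold remPerm
  rw [insPerm_symm_last]
  have h : (finSuccEquiv' p).symm.trans ((insPerm σ p).trans (finSuccEquiv' (Fin.last n))) =
      σ.optionCongr := by
    unfold insPerm
    ext x : 1
    simp [Equiv.trans_apply]
  rw [h, Equiv.removeNone_optionCongr]

lemma insPerm_remPerm (τ : Equiv.Perm (Fin (n + 1))) :
    insPerm (remPerm τ) (τ.symm (Fin.last n)) = τ := by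
  unfold insPerm remPerm
  set p := τ.symm (Fin.last n) with hp
  set e := (finSuccEquiv' p).symm.trans (τ.trans (finSuccEquiv' (Fin.last n))) with he
  have hnone : e none = none := by
    rw [he]
    simp only [Equiv.trans_apply, finSuccEquiv'_symm_none, hp]
    rw [Equiv.apply_symm_apply, finSuccEquiv'_at]
  rw [optionCongr_removeNone e hnone]
  ext x : 1
  rw [he]
  simp [Equiv.trans_apply]

lemma mem_Av {σ : Equiv.Perm (Fin n)} : σ ∈ Av n ↔ Avoids321 σ := by
  simp [Av]

lemma sum_Av_succ (n : ℕ) (w : Equiv.Perm (Fin (n + 1)) → ℤ) :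
    ∑ τ ∈ Av (n + 1), w τ =
      ∑ σ ∈ Av n, ∑ p ∈ univ.filter (fun p : Fin (n + 1) => minA σ ≤ p.val),
        w (insPerm σ p) := by
  rw [Finset.sum_sigma']
  refine Finset.sum_nbij' (i := fun τ => ⟨remPerm τ, τ.symm (Fin.last n)⟩)
    (j := fun x => insPerm x.1 x.2) ?_ ?_ ?_ ?_ ?_
  · intro τ hτ
    rw [mem_Av] at hτ
    have h := hτ
    rw [← insPerm_remPerm τ, avoids_insPerm] at h
    rw [Finset.mem_sigma, mem_Av]
    exact ⟨h.1, by rw [Finset.mem_filter]; exact ⟨Finset.mem_univ _, minA_le_iff.mpr h.2⟩⟩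
  · intro x hx
    rw [Finset.mem_sigma, mem_Av, Finset.mem_filter] at hx
    rw [mem_Av, avoids_insPerm]
    exact ⟨hx.1, minA_le_iff.mp hx.2.2⟩
  · intro τ hτ
    exact insPerm_remPerm τ
  · intro x hx
    show (⟨remPerm (insPerm x.1 x.2), (insPerm x.1 x.2).symm (Fin.last n)⟩ :
        (_ : Equiv.Perm (Fin n)) × Fin (n + 1)) = x
    rw [insPerm_symm_last, remPerm_insPerm]
  · intro τ hτ
    show w τ = w (insPerm (remPerm τ) (τ.symm (Fin.last n)))
    conv_lhs => rw [← insPerm_remPerm τ]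

/-- The signed count of `321`-avoiding permutations with given `minA`. -/
def Fc (n j : ℕ) : ℤ := ∑ σ ∈ Av n, if minA σ = j then (-1 : ℤ) ^ invPerm σ else 0

lemma innerSumAux17 (σ : Equiv.Perm (Fin n)) (j : ℕ) :
    ∑ p ∈ univ.filter (fun p : Fin (n + 1) => minA σ ≤ p.val),
      (if minA (insPerm σ p) = j then (-1 : ℤ) ^ invPerm (insPerm σ p) else 0) =
    (if minA σ = j then (-1 : ℤ) ^ invPerm σ else 0) +
      (if 1 ≤ j ∧ j ≤ n ∧ minA σ ≤ j - 1 then (-1 : ℤ) ^ invPerm σ * (-1 : ℤ) ^ (n + 1 - j)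
        else 0) := by
  classical
  have hlast : (Fin.last n) ∈ univ.filter (fun p : Fin (n + 1) => minA σ ≤ p.val) := by
    rw [Finset.mem_filter]; exact ⟨Finset.mem_univ _, minA_le σ⟩
  rw [← Finset.add_sum_erase _ _ hlast]
  congr 1
  · rw [minA_insPerm_last, invPerm_insPerm]
    have h0 : n - (Fin.last n).val = 0 := by simp
    rw [h0, Nat.add_zero]
  · have hcong : ∀ p ∈ (univ.filter (fun p : Fin (n + 1) => minA σ ≤ p.val)).erase (Fin.last n),
        (if minA (insPerm σ p) = j then (-1 : ℤ) ^ invPerm (insPerm σ p) else 0) =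
        (if p.val + 1 = j then (-1 : ℤ) ^ (invPerm σ + (n - p.val)) else 0) := by
      intro p hp
      rw [Finset.mem_erase, Finset.mem_filter] at hp
      have hplt : p.val < n := by
        have h1 : p.val < n + 1 := p.isLt
        have h3 : p.val ≠ n := fun h => hp.1 (Fin.ext h)
        omega
      rw [minA_insPerm_of_lt hplt (minA_le_iff.mp hp.2.2), invPerm_insPerm]
    rw [Finset.sum_congr rfl hcong]
    by_cases hc : 1 ≤ j ∧ j ≤ n ∧ minA σ ≤ j - 1
    · rw [if_pos hc]
      obtain ⟨h1, h2, h3⟩ := hc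
      have hmem : (⟨j - 1, by omega⟩ : Fin (n + 1)) ∈
          (univ.filter (fun p : Fin (n + 1) => minA σ ≤ p.val)).erase (Fin.last n) := by
        rw [Finset.mem_erase, Finset.mem_filter]
        refine ⟨?_, Finset.mem_univ _, h3⟩
        intro h
        have := congrArg Fin.val h
        simp only [Fin.val_last] at this
        omega
      rw [Finset.sum_eq_single_of_mem _ hmem ?_]
      · rw [if_pos (show j - 1 + 1 = j by omega),
          show n - (⟨j - 1, by omega⟩ : Fin (n + 1)).val = n + 1 - j from by
            simp only []; omega, pow_add]
      · intro p hp hne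
        rw [if_neg]
        intro hj
        exact hne (Fin.ext (by simp only [] at hj ⊢; omega))
    · rw [if_neg hc]
      apply Finset.sum_eq_zero
      intro p hp
      rw [Finset.mem_erase, Finset.mem_filter] at hp
      have hplt : p.val < n := by
        have h1 : p.val < n + 1 := p.isLt
        have h3 : p.val ≠ n := fun h => hp.1 (Fin.ext h)
        omega
      have hm := hp.2.2
      rw [if_neg]
      intro hj
      exact hc ⟨by omega, by omega, by omega⟩

lemma Fc_succ (n j : ℕ) :
    Fc (n + 1) j = Fc n j +
      (if 1 ≤ j ∧ j ≤ n then (-1 : ℤ) ^ (n + 1 - j) * ∑ k ∈ Finset.range j, Fc n k else 0) := by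
  rw [show Fc (n + 1) j = ∑ τ ∈ Av (n + 1), (if minA τ = j then (-1 : ℤ) ^ invPerm τ else 0)
    from rfl]
  rw [sum_Av_succ n (fun τ => if minA τ = j then (-1 : ℤ) ^ invPerm τ else 0)]
  rw [Finset.sum_congr rfl (fun σ _ => innerSumAux17 σ j), Finset.sum_add_distrib]
  congr 1
  by_cases hc : 1 ≤ j ∧ j ≤ n
  · rw [if_pos hc]
    have hr : ∀ σ ∈ Av n,
        (if 1 ≤ j ∧ j ≤ n ∧ minA σ ≤ j - 1 then
          (-1 : ℤ) ^ invPerm σ * (-1 : ℤ) ^ (n + 1 - j) else 0)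
        = (-1 : ℤ) ^ (n + 1 - j) *
            ∑ k ∈ Finset.range j, (if minA σ = k then (-1 : ℤ) ^ invPerm σ else 0) := by
      intro σ _
      rw [Finset.sum_ite_eq (Finset.range j) (minA σ)]
      simp only [Finset.mem_range]
      by_cases h3 : minA σ < j
      · rw [if_pos h3, if_pos ⟨hc.1, hc.2, by omega⟩, mul_comm]
      · rw [if_neg h3, if_neg (by intro hh; exact h3 (by omega)), mul_zero]
    rw [Finset.sum_congr rfl hr, ← Finset.mul_sum]
    congr 1
    rw [Finset.sum_comm]
    rfl
  · rw [if_neg hc]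
    apply Finset.sum_eq_zero
    intro σ _
    rw [if_neg (by tauto)]

/-- Ballot numbers (as an integer-valued array), defined by the recursion coming from the
insertion bijection. -/
def bb : ℕ → ℕ → ℤ
  | 0 => fun i => if i = 0 then 1 else 0
  | m + 1 => fun i => if i ≤ m then bb m i + ∑ k ∈ Finset.range i, bb m k else 0

lemma bb_succ (m i : ℕ) :
    bb (m + 1) i = if i ≤ m then bb m i + ∑ k ∈ Finset.range i, bb m k else 0 := rfl

lemma bb_zero (m : ℕ) : bb m 0 = 1 := by
  induction m with
  | zero => rfl
  | succ m ih => simp [bb_succ, ih]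

lemma bb_eq_zero {m i : ℕ} (h1 : m ≤ i) (h2 : 1 ≤ i) : bb m i = 0 := by
  cases m with
  | zero => show (if i = 0 then (1 : ℤ) else 0) = 0; rw [if_neg (by omega)]
  | succ m => rw [bb_succ, if_neg (by omega)]

lemma sum_even_filter (f : ℕ → ℤ) (j : ℕ) :
    ∑ k ∈ Finset.range j, (if k % 2 = 0 then f (k / 2) else 0) =
      ∑ i ∈ Finset.range ((j + 1) / 2), f i := by
  induction j with
  | zero => rfl
  | succ j ih =>
    rw [Finset.sum_range_succ, ih]
    by_cases h : j % 2 = 0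
    · rw [if_pos h, show (j + 1 + 1) / 2 = (j + 1) / 2 + 1 by omega, Finset.sum_range_succ,
        show j / 2 = (j + 1) / 2 by omega]
    · rw [if_neg h, add_zero, show (j + 1 + 1) / 2 = (j + 1) / 2 by omega]

lemma sum_alt (f : ℕ → ℤ) (j : ℕ) :
    ∑ k ∈ Finset.range j, (if k % 2 = 0 then f (k / 2) else -(f (k / 2))) =
      if j % 2 = 0 then 0 else f (j / 2) := by
  induction j with
  | zero => rfl
  | succ j ih =>
    rw [Finset.sum_range_succ, ih]
    by_cases h : j % 2 = 0
    · rw [if_pos h, if_pos h, if_neg (by omega), zero_add, show j / 2 = (j + 1) / 2 by omega]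
    · rw [if_neg h, if_neg h, if_pos (by omega)]
      ring

lemma Fc_one (j : ℕ) : Fc 1 j = if j = 0 then 1 else 0 := by
  have hone : ∀ σ : Equiv.Perm (Fin 1), σ = 1 := fun σ => Equiv.ext fun x => Subsingleton.elim _ _
  have hAv : Av 1 = {(1 : Equiv.Perm (Fin 1))} := by
    apply Finset.eq_singleton_iff_unique_mem.mpr
    constructor
    · rw [mem_Av]
      rintro ⟨i, j, k, hij, hjk, -, -⟩
      exact absurd (hij.trans hjk) (by rw [Subsingleton.elim i k]; exact lt_irrefl _)
    · intro σ _
      exact hone σ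
  have hminA : minA (1 : Equiv.Perm (Fin 1)) = 0 := by
    apply Nat.le_antisymm _ (Nat.zero_le _)
    rw [minA_le_iff]
    intro a b hab _
    exact absurd (Subsingleton.elim a b ▸ hab) (lt_irrefl _)
  have hinv : invPerm (1 : Equiv.Perm (Fin 1)) = 0 := by
    rw [invPerm, Finset.card_eq_zero, Finset.filter_eq_empty_iff]
    intro p _
    rintro ⟨h1, -⟩
    exact absurd (Subsingleton.elim p.1 p.2 ▸ h1) (lt_irrefl _)
  rw [Fc, hAv, Finset.sum_singleton, hminA, hinv]
  by_cases h : j = 0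
  · rw [if_pos (by omega), if_pos h, pow_zero]
  · rw [if_neg (by omega), if_neg h]

lemma claimO_base (j : ℕ) : Fc 1 j = if j % 2 = 0 then bb 0 (j / 2) else 0 := by
  rw [Fc_one]
  by_cases h : j = 0
  · subst h
    rw [if_pos rfl, if_pos rfl, bb_zero]
  · rw [if_neg h]
    by_cases h2 : j % 2 = 0
    · rw [if_pos h2, show bb 0 (j / 2) = if j / 2 = 0 then 1 else 0 from rfl,
        if_neg (by omega)]
    · rw [if_neg h2]

lemma stepE (m : ℕ) (hO : ∀ j, Fc (2 * m + 1) j = if j % 2 = 0 then bb m (j / 2) else 0) :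
    ∀ j, Fc (2 * m + 2) j =
      if j % 2 = 0 then bb (m + 1) (j / 2) else -(bb (m + 1) (j / 2)) := by
  intro j
  have h := Fc_succ (2 * m + 1) j
  simp only [hO] at h
  rw [sum_even_filter (bb m) j] at h
  rw [h]
  rcases Nat.lt_or_ge j 1 with h1 | h1
  · have hj0 : j = 0 := by omega
    subst hj0
    norm_num [bb_succ, bb_zero]
  · by_cases hpar : j % 2 = 0
    · rw [if_pos hpar, if_pos hpar]
      by_cases h2 : j ≤ 2 * m + 1
      · rw [if_pos ⟨h1, h2⟩, bb_succ, if_pos (by omega)]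
        have hpow : (-1 : ℤ) ^ (2 * m + 1 + 1 - j) = 1 :=
          Even.neg_one_pow ⟨m + 1 - j / 2, by omega⟩
        rw [hpow, one_mul, show (j + 1) / 2 = j / 2 by omega]
      · rw [if_neg (by omega), add_zero, bb_eq_zero (by omega) (by omega),
          bb_eq_zero (by omega) (by omega)]
    · rw [if_neg hpar, if_neg hpar]
      by_cases h2 : j ≤ 2 * m + 1
      · rw [if_pos ⟨h1, h2⟩, bb_succ, if_pos (by omega)]
        have hpow : (-1 : ℤ) ^ (2 * m + 1 + 1 - j) = -1 :=
          Odd.neg_one_pow ⟨m - j / 2, by omega⟩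
        rw [hpow, show (j + 1) / 2 = j / 2 + 1 by omega, Finset.sum_range_succ]
        ring
      · rw [if_neg (by omega), add_zero, bb_eq_zero (by omega) (by omega)]
        norm_num

lemma stepO (m : ℕ)
    (hE : ∀ j, Fc (2 * m + 2) j =
      if j % 2 = 0 then bb (m + 1) (j / 2) else -(bb (m + 1) (j / 2))) :
    ∀ j, Fc (2 * m + 3) j = if j % 2 = 0 then bb (m + 1) (j / 2) else 0 := by
  intro j
  have h := Fc_succ (2 * m + 2) j
  simp only [hE] at h
  rw [sum_alt (bb (m + 1)) j] at h
  rw [h]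
  rcases Nat.lt_or_ge j 1 with h1 | h1
  · have hj0 : j = 0 := by omega
    subst hj0
    norm_num
  · by_cases hpar : j % 2 = 0
    · rw [if_pos hpar, if_pos hpar, if_pos hpar]
      by_cases h2 : j ≤ 2 * m + 2
      · rw [if_pos ⟨h1, h2⟩, mul_zero, add_zero]
      · rw [if_neg (by omega), add_zero]
    · rw [if_neg hpar, if_neg hpar, if_neg hpar]
      by_cases h2 : j ≤ 2 * m + 2
      · rw [if_pos ⟨h1, h2⟩]
        have hpow : (-1 : ℤ) ^ (2 * m + 2 + 1 - j) = 1 :=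
          Even.neg_one_pow ⟨m + 1 - j / 2, by omega⟩
        rw [hpow, one_mul]
        ring
      · rw [if_neg (by omega), add_zero, bb_eq_zero (by omega) (by omega), neg_zero]

lemma claimO : ∀ m j, Fc (2 * m + 1) j = if j % 2 = 0 then bb m (j / 2) else 0 := by
  intro m
  induction m with
  | zero => simpa using claimO_base
  | succ m ih =>
    intro j
    rw [show 2 * (m + 1) + 1 = 2 * m + 3 by ring]
    exact stepO m (stepE m ih) j

lemma claimE (m : ℕ) (hm : 1 ≤ m) (j : ℕ) :
    Fc (2 * m) j = if j % 2 = 0 then bb m (j / 2) else -(bb m (j / 2)) := by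
  obtain ⟨m', rfl⟩ : ∃ m', m = m' + 1 := ⟨m - 1, by omega⟩
  rw [show 2 * (m' + 1) = 2 * m' + 2 by ring]
  exact stepE m' (claimO m') j

lemma sum_Fc (n : ℕ) :
    ∑ j ∈ Finset.range (n + 1), Fc n j = ∑ σ ∈ Av n, (-1 : ℤ) ^ invPerm σ := by
  unfold Fc
  rw [Finset.sum_comm]
  refine Finset.sum_congr rfl fun σ _ => ?_
  rw [Finset.sum_ite_eq (Finset.range (n + 1)) (minA σ), if_pos
    (Finset.mem_range.mpr (Nat.lt_succ_of_le (minA_le σ)))]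

lemma bb_pascal (m i : ℕ) (h1 : 1 ≤ i) (h2 : i ≤ m) :
    bb (m + 1) i = bb (m + 1) (i - 1) + bb m i := by
  obtain ⟨i', rfl⟩ : ∃ i', i = i' + 1 := ⟨i - 1, by omega⟩
  rw [bb_succ, bb_succ, if_pos (by omega), if_pos (by omega), Finset.sum_range_succ]
  simp only [Nat.add_sub_cancel]
  ring

lemma bb_closed : ∀ m i : ℕ, i + 1 ≤ m →
    bb m (i + 1) = ((m + i).choose (i + 1) : ℤ) - ((m + i).choose i : ℤ) := by
  intro m
  induction m with
  | zero => intro i h; exact absurd h (by omega)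
  | succ m ih =>
    intro i
    induction i with
    | zero =>
      intro _
      cases m with
      | zero => norm_num [bb_succ]
      | succ m' =>
        rw [bb_succ, if_pos (by omega), Finset.sum_range_one, bb_zero,
          ih 0 (by omega)]
        simp only [Nat.add_zero, Nat.zero_add, Nat.choose_one_right, Nat.choose_zero_right]
        push_cast
        ring
    | succ i ihi =>
      intro h
      by_cases hm : i + 2 ≤ m
      · rw [bb_pascal m (i + 2) (by omega) (by omega)]
        have hred : i + 2 - 1 = i + 1 := rfl
        simp only [hred]
        have hih1 := ihi (by omega)
        have hih2 := ih (i + 1) (by omega)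
        rw [show m + 1 + i = m + i + 1 by ring] at hih1
        rw [show m + (i + 1) = m + i + 1 by ring] at hih2
        rw [hih1, hih2, show m + 1 + (i + 1) = m + i + 2 by ring]
        have e1 : (m + i + 2).choose (i + 2) =
            (m + i + 1).choose (i + 1) + (m + i + 1).choose (i + 2) :=
          Nat.choose_succ_succ (m + i + 1) (i + 1)
        have e2 : (m + i + 2).choose (i + 1) =
            (m + i + 1).choose i + (m + i + 1).choose (i + 1) :=
          Nat.choose_succ_succ (m + i + 1) i
        push_cast [e1, e2]
        ring
      · have hmi : m = i + 1 := by omega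
        subst hmi
        rw [bb_eq_zero (by omega) (by omega)]
        have hsym : (i + 1 + 1 + (i + 1)).choose (i + 2) =
            (i + 1 + 1 + (i + 1)).choose (i + 1) := by
          have hs := Nat.choose_symm (n := 2 * i + 3) (k := i + 2) (by omega)
          rw [show 2 * i + 3 - (i + 2) = i + 1 by omega] at hs
          rw [show i + 1 + 1 + (i + 1) = 2 * i + 3 by ring]
          exact hs.symm
        rw [hsym]
        ring

lemma bb_catalan (n : ℕ) (hn : 1 ≤ n) : bb (n + 1) n = (catalan n : ℤ) := by
  obtain ⟨k, rfl⟩ : ∃ k, n = k + 1 := ⟨n - 1, by omega⟩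
  rw [bb_closed (k + 2) k (by omega)]
  have h1 : (k + 1 + 1) * catalan (k + 1) = (2 * (k + 1)).choose (k + 1) :=
    succ_mul_catalan_eq_centralBinom (k + 1)
  have h2 := Nat.choose_succ_right_eq (2 * (k + 1)) k
  rw [show 2 * (k + 1) - k = k + 2 by omega] at h2
  rw [show k + 2 + k = 2 * (k + 1) by ring]
  have h1' : ((k : ℤ) + 2) * (catalan (k + 1) : ℤ) = ((2 * (k + 1)).choose (k + 1) : ℤ) := by
    exact_mod_cast congrArg (Nat.cast (R := ℤ)) h1
  have h2' : ((2 * (k + 1)).choose (k + 1) : ℤ) * ((k : ℤ) + 1) =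
      ((2 * (k + 1)).choose k : ℤ) * ((k : ℤ) + 2) := by
    exact_mod_cast congrArg (Nat.cast (R := ℤ)) h2
  apply mul_left_cancel₀ (a := ((k : ℤ) + 2)) (by positivity)
  rw [h1', mul_sub]
  linarith [h2']

end Stmt17Aux

/-- Simion–Schmidt signed enumeration:
`Σ_{σ∈Av_{2n}(321)} (-1)^{inv σ} = 0` and `Σ_{σ∈Av_{2n+1}(321)} (-1)^{inv σ} = C_n`. -/
theorem stmt17 (n : ℕ) (hn : 1 ≤ n) :
    (∑ σ ∈ Av (2 * n), (-1 : ℤ) ^ invPerm σ) = 0 ∧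
      (∑ σ ∈ Av (2 * n + 1), (-1 : ℤ) ^ invPerm σ) = catalan n := by
  constructor
  · rw [← sum_Fc (2 * n), Finset.sum_congr rfl (fun j _ => claimE n hn j),
      sum_alt (bb n) (2 * n + 1), if_neg (by omega), show (2 * n + 1) / 2 = n by omega]
    exact bb_eq_zero le_rfl hn
  · rw [← sum_Fc (2 * n + 1), Finset.sum_congr rfl (fun j _ => claimO n j),
      sum_even_filter (bb n) (2 * n + 1 + 1), show (2 * n + 1 + 1 + 1) / 2 = n + 1 by omega,
      Finset.sum_range_succ, bb_eq_zero le_rfl hn, add_zero]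
    have h : (∑ i ∈ Finset.range n, bb n i) = bb (n + 1) n := by
      rw [bb_succ, if_pos le_rfl, bb_eq_zero le_rfl hn, zero_add]
    rw [h, bb_catalan n hn]
end
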